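/- arXiv:1805.12339 — 5 statements merged into one kernel-verified Lean document; each statement's English description precedes it below -/
import Mathlib

section
/- Let r ≥ 2 and k ≥ 1 be integers, let L ⊆ F_∞^r be a strongly discrete subgroup, let v ∈ F_∞^r, and let ω ∈ K^r have coordinates ω_1,…,ω_r linearly independent over F_∞. Then xω ≠ 0 for every nonzero x ∈ F_∞^r, and the family ((xω)^{−k})_{x ∈ (v+L)∖{0}} is summable in K; in particular the Eisenstein series value E_{k,v+L}(ω) := Σ_{x∈v+L, x≠0} (xω)^{−k} is a well-defined element of K. (Proposition 13.1.) -/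
open scoped BigOperators

/-- The pairing of a row vector `x` with a column vector `ω`: `xω = ∑ i, x i * ω i`. -/
noncomputable def rvPair {K : Type*} [Field K] {r : ℕ} (x ω : Fin r → K) : K :=
  ∑ i, x i * ω i

/-- A subset `M` of a seminormed additive group is strongly discrete if `M ∩ B` is finite
for every bounded subset `B`. -/
def StronglyDiscrete {E : Type*} [SeminormedAddCommGroup E] (M : Set E) : Prop :=
  ∀ B : Set E, Bornology.IsBounded B → (M ∩ B).Finite

/-- The coset `v + L`. -/
def cosetOf {G : Type*} [AddGroup G] (v : G) (L : Set G) : Set G := {x | x - v ∈ L}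

/-- the Eisenstein series `E_{k,v+L}(ω)` is well defined: each `xω ≠ 0` for
nonzero `x ∈ F_∞^r` and the family `((xω)^{-k})_{x ∈ (v+L)∖{0}}` is summable. -/
theorem eisenstein_summable
    (K : Type*) [NontriviallyNormedField K] [IsUltrametricDist K] [CompleteSpace K]
    [IsAlgClosed K]
    (Finf : Subfield K) (hFinfclosed : IsClosed (Finf : Set K))
    (hFinfloc : LocallyCompactSpace Finf)
    (r k : ℕ) (hr : 2 ≤ r) (hk : 1 ≤ k)
    (L : AddSubgroup (Fin r → K)) (hLF : ∀ x ∈ L, ∀ i, x i ∈ Finf)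
    (hLdisc : StronglyDiscrete (L : Set (Fin r → K)))
    (v : Fin r → K) (hv : ∀ i, v i ∈ Finf)
    (ω : Fin r → K)
    (hω : ∀ x : Fin r → K, (∀ i, x i ∈ Finf) → rvPair x ω = 0 → x = 0) :
    (∀ x : Fin r → K, (∀ i, x i ∈ Finf) → x ≠ 0 → rvPair x ω ≠ 0) ∧
    Summable (fun x : {x : Fin r → K // x ∈ cosetOf v (L : Set (Fin r → K)) ∧ x ≠ 0} =>
      ((rvPair (x : Fin r → K) ω) ^ k)⁻¹) := by
  have hrpos : 0 < r := by omega
  haveI : Nonempty (Fin r) := ⟨⟨0, hrpos⟩⟩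
  -- Part 1: nonvanishing
  have part1 : ∀ x : Fin r → K, (∀ i, x i ∈ Finf) → x ≠ 0 → rvPair x ω ≠ 0 :=
    fun x hx hne h0 => hne (hω x hx h0)
  -- coordinates of coset elements lie in Finf
  have hcoords : ∀ x ∈ cosetOf v (L : Set (Fin r → K)), ∀ i, x i ∈ Finf := by
    intro x hx i
    have h1 : (x - v) i ∈ Finf := hLF _ hx i
    have : x i = (x - v) i + v i := by simp
    rw [this]
    exact add_mem h1 (hv i)
  -- main finiteness claim
  have hfin : ∀ C : ℝ,
      {x : Fin r → K | x ∈ cosetOf v (L : Set (Fin r → K)) ∧ ‖rvPair x ω‖ ≤ C}.Finite := by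
    intro C
    -- it suffices to show the set is bounded in norm by some M
    suffices h : ∃ M : ℝ, ∀ x : Fin r → K,
        x ∈ cosetOf v (L : Set (Fin r → K)) → ‖rvPair x ω‖ ≤ C → ‖x‖ ≤ M by
      obtain ⟨M, hM⟩ := h
      have hBfin : ((L : Set (Fin r → K)) ∩ Metric.closedBall 0 (M + ‖v‖)).Finite :=
        hLdisc _ Metric.isBounded_closedBall
      apply (hBfin.preimage ((sub_left_injective (b := v)).injOn)).subset
      rintro x ⟨hx1, hx2⟩
      refine ⟨hx1, ?_⟩
      simp only [Metric.mem_closedBall, dist_zero_right]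
      calc ‖x - v‖ ≤ ‖x‖ + ‖v‖ := norm_sub_le x v
        _ ≤ M + ‖v‖ := by linarith [hM x hx1 hx2]
    by_cases htriv : ∃ a : K, a ∈ Finf ∧ 0 < ‖a‖ ∧ ‖a‖ < 1
    · -- nontrivial induced absolute value on Finf
      obtain ⟨π, hπF, hπ0, hπ1⟩ := htriv
      -- the unit ball of Finf is compact
      have hB1 : IsCompact ((Finf : Set K) ∩ Metric.closedBall 0 1) := by
        obtain ⟨s, hscpt, hsnhds⟩ := exists_compact_mem_nhds (0 : Finf)
        obtain ⟨ε, hε, hεs⟩ := Metric.mem_nhds_iff.mp hsnhds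
        have hδ : IsCompact (Metric.closedBall (0 : Finf) (ε / 2)) := by
          refine hscpt.of_isClosed_subset Metric.isClosed_closedBall ?_
          exact (Metric.closedBall_subset_ball (by linarith)).trans hεs
        have him : IsCompact ((Subtype.val : Finf → K) '' Metric.closedBall (0 : Finf) (ε / 2)) :=
          hδ.image continuous_subtype_val
        have himeq : (Subtype.val : Finf → K) '' Metric.closedBall (0 : Finf) (ε / 2)
            = (Finf : Set K) ∩ Metric.closedBall 0 (ε / 2) := by
          ext a
          constructor
          · rintro ⟨b, hb, rfl⟩
            refine ⟨b.2, ?_⟩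
            simpa [Metric.mem_closedBall, Subtype.dist_eq] using hb
          · rintro ⟨ha1, ha2⟩
            exact ⟨⟨a, ha1⟩, by simpa [Metric.mem_closedBall, Subtype.dist_eq] using ha2, rfl⟩
        rw [himeq] at him
        obtain ⟨n, hn⟩ := exists_pow_lt_of_lt_one (by linarith : (0:ℝ) < ε / 2) hπ1
        have hπn : π ^ n ≠ 0 := pow_ne_zero n (by rintro rfl; simp at hπ0)
        have him2 : IsCompact ((fun a : K => (π ^ n)⁻¹ * a) ''
            ((Finf : Set K) ∩ Metric.closedBall 0 (ε / 2))) :=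
          him.image (by continuity)
        refine him2.of_isClosed_subset
          (hFinfclosed.inter Metric.isClosed_closedBall) ?_
        rintro a ⟨ha1, ha2⟩
        refine ⟨π ^ n * a, ⟨mul_mem (pow_mem hπF n) ha1, ?_⟩, by field_simp⟩
        simp only [Metric.mem_closedBall, dist_zero_right] at ha2 ⊢
        rw [norm_mul, norm_pow]
        calc ‖π‖ ^ n * ‖a‖ ≤ ‖π‖ ^ n * 1 := by
              exact mul_le_mul_of_nonneg_left ha2 (by positivity)
          _ ≤ ε / 2 := by rw [mul_one]; exact hn.le
      -- the annulus is compact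
      set A : Set (Fin r → K) :=
        {x | (∀ i, x i ∈ Finf) ∧ ‖x‖ ≤ 1 ∧ ‖π‖ ≤ ‖x‖} with hA
      have hAclosed : IsClosed A := by
        have h1 : IsClosed {x : Fin r → K | ∀ i, x i ∈ Finf} := by
          have : {x : Fin r → K | ∀ i, x i ∈ Finf}
              = Set.pi Set.univ (fun _ => (Finf : Set K)) := by
            ext x; simp [Set.mem_pi]
          rw [this]
          exact isClosed_set_pi (fun i _ => hFinfclosed)
        have h2 : IsClosed {x : Fin r → K | ‖x‖ ≤ 1} :=
          isClosed_le (continuous_norm) continuous_const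
        have h3 : IsClosed {x : Fin r → K | ‖π‖ ≤ ‖x‖} :=
          isClosed_le continuous_const continuous_norm
        exact (h1.inter (h2.inter h3))
      have hAcpt : IsCompact A := by
        have hsub : A ⊆ Set.pi Set.univ (fun _ : Fin r => (Finf : Set K) ∩ Metric.closedBall 0 1) := by
          rintro x ⟨hx1, hx2, _⟩ i _
          refine ⟨hx1 i, ?_⟩
          simp only [Metric.mem_closedBall, dist_zero_right]
          exact (norm_le_pi_norm x i).trans hx2
        exact (isCompact_univ_pi (fun _ => hB1)).of_isClosed_subset hAclosed hsub
      have hAne : A.Nonempty := by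
        refine ⟨fun _ => π, fun i => hπF, ?_, ?_⟩ <;>
          simp [pi_norm_const, hπ1.le]
      have hcont : Continuous (fun x : Fin r → K => ‖rvPair x ω‖) := by
        unfold rvPair
        exact (continuous_finset_sum _ fun i _ => (continuous_apply i).mul continuous_const).norm
      obtain ⟨x₀, hx₀A, hx₀min⟩ := hAcpt.exists_isMinOn hAne hcont.continuousOn
      set c := ‖rvPair x₀ ω‖ with hc
      have hx₀ne : x₀ ≠ 0 := by
        intro h0
        rw [h0] at hx₀A
        have h2 := hx₀A.2.2
        simp only [norm_zero] at h2
        linarith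
      have hcpos : 0 < c := norm_pos_iff.mpr (part1 x₀ hx₀A.1 hx₀ne)
      -- lower bound c * ‖x‖ ≤ ‖rvPair x ω‖
      have hlow : ∀ x : Fin r → K, (∀ i, x i ∈ Finf) → x ≠ 0 →
          c * ‖x‖ ≤ ‖rvPair x ω‖ := by
        intro x hx hxne
        have hxpos : 0 < ‖x‖ := norm_pos_iff.mpr hxne
        -- find coordinate achieving the sup norm
        obtain ⟨j, _, hj⟩ := Finset.exists_mem_eq_sup (Finset.univ : Finset (Fin r))
          Finset.univ_nonempty (fun i => ‖x i‖₊)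
        have hjnorm : ‖x j‖ = ‖x‖ := by
          have : ‖x‖₊ = ‖x j‖₊ := by rw [Pi.nnnorm_def, hj]
          simpa using congrArg NNReal.toReal this.symm
        have hxj : x j ≠ 0 := by
          intro h0; rw [h0, norm_zero] at hjnorm; exact absurd hjnorm.symm (ne_of_gt hxpos)
        set t : K := (x j)⁻¹ with ht
        have htF : t ∈ Finf := inv_mem (hx j)
        have htn : ‖t‖ = ‖x‖⁻¹ := by rw [ht, norm_inv, hjnorm]
        have hyA : t • x ∈ A := by
          refine ⟨fun i => mul_mem htF (hx i), ?_, ?_⟩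
          · rw [norm_smul, htn, inv_mul_cancel₀ (ne_of_gt hxpos)]
          · rw [norm_smul, htn, inv_mul_cancel₀ (ne_of_gt hxpos)]; exact hπ1.le
        have hpair : rvPair (t • x) ω = t * rvPair x ω := by
          unfold rvPair
          rw [Finset.mul_sum]
          exact Finset.sum_congr rfl fun i _ => by simp [mul_assoc]
        have := hx₀min hyA
        simp only [Set.mem_setOf_eq] at this
        rw [hpair, norm_mul, htn] at this
        calc c * ‖x‖ ≤ (‖x‖⁻¹ * ‖rvPair x ω‖) * ‖x‖ :=
              mul_le_mul_of_nonneg_right this (norm_nonneg x)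
          _ = ‖rvPair x ω‖ := by field_simp
      refine ⟨max 0 (C / c), fun x hx hxC => ?_⟩
      by_cases hx0 : x = 0
      · simp [hx0]
      · have := hlow x (hcoords x hx) hx0
        have : ‖x‖ ≤ C / c := by
          rw [le_div_iff₀ hcpos]
          calc ‖x‖ * c = c * ‖x‖ := mul_comm _ _
            _ ≤ ‖rvPair x ω‖ := this
            _ ≤ C := hxC
        exact this.trans (le_max_right _ _)
    · -- trivial induced absolute value: L itself is finite
      push_neg at htriv
      have hnorm1 : ∀ a : K, a ∈ Finf → ‖a‖ ≤ 1 := by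
        intro a haF
        by_contra h
        push_neg at h
        have ha0 : a ≠ 0 := by rintro rfl; rw [norm_zero] at h; linarith
        have h1 : (a⁻¹ : K) ∈ Finf := inv_mem haF
        have h2 : 0 < ‖a⁻¹‖ := by rw [norm_inv]; exact inv_pos.mpr (by linarith)
        have h3 : ‖a⁻¹‖ < 1 := by
          rw [norm_inv]
          rw [inv_lt_one_iff₀]
          right; exact h
        exact absurd h3 (not_lt.mpr (by linarith [htriv a⁻¹ h1 h2]))
      have hLb : (L : Set (Fin r → K)) ⊆ Metric.closedBall 0 1 := by
        intro x hx
        simp only [Metric.mem_closedBall, dist_zero_right]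
        exact pi_norm_le_iff_of_nonneg zero_le_one |>.mpr
          fun i => hnorm1 _ (hLF x hx i)
      have hLfin : ((L : Set (Fin r → K))).Finite := by
        have h := hLdisc (Metric.closedBall 0 1) Metric.isBounded_closedBall
        exact (h.subset (by intro x hx; exact ⟨hx, hLb hx⟩)).subset (by intro x hx; exact hx)
      refine ⟨1 + ‖v‖, fun x hx _ => ?_⟩
      have h1 : ‖x - v‖ ≤ 1 := by
        have := hLb hx
        simpa [Metric.mem_closedBall, dist_zero_right] using this
      calc ‖x‖ = ‖(x - v) + v‖ := by ring_nf
        _ ≤ ‖x - v‖ + ‖v‖ := norm_add_le _ _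
        _ ≤ 1 + ‖v‖ := by linarith
  refine ⟨part1, ?_⟩
  apply NonarchimedeanAddGroup.summable_of_tendsto_cofinite_zero
  rw [NormedAddCommGroup.tendsto_nhds_zero]
  intro ε hε
  rw [Filter.eventually_cofinite]
  apply ((hfin (max 1 ε⁻¹)).preimage (Subtype.val_injective.injOn)).subset
  rintro ⟨x, hxc, hx0⟩ hbig
  simp only [Set.mem_setOf_eq, not_lt] at hbig
  have hφ : rvPair x ω ≠ 0 := part1 x (hcoords x hxc) hx0
  have hφpos : 0 < ‖rvPair x ω‖ := norm_pos_iff.mpr hφ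
  rw [norm_inv, norm_pow] at hbig
  have hkle : ‖rvPair x ω‖ ^ k ≤ ε⁻¹ := by
    have hppos : 0 < ‖rvPair x ω‖ ^ k := by positivity
    exact (le_inv_comm₀ hε hppos).mp hbig
  have hle : ‖rvPair x ω‖ ≤ max 1 ε⁻¹ := by
    by_cases h1 : ‖rvPair x ω‖ ≤ 1
    · exact h1.trans (le_max_left _ _)
    · push_neg at h1
      refine le_trans ?_ (hkle.trans (le_max_right _ _))
      exact le_self_pow₀ h1.le (by omega)
  exact ⟨hxc, hle⟩
end

section
/- With notation as in the context: (i) for λ′ ∈ F^{r−1}, one has (v+L)·u(λ′) = v+L if and only if λ′ ∈ Λ′; (ii) Λ′ is a finitely generated A-submodule of F^{r−1} that spans F^{r−1} over F; (iii) for every nonzero x_1 ∈ v_1 + L_1 one has x_1Λ′ ⊆ L′ and the quotient group L′/x_1Λ′ is finite. (Lemma 13.7.) -/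
open scoped BigOperators

/-- The first-component kernel `L′ = {x′ : (0,x′) ∈ L}`. -/
def LprimeSet {A F : Type*} [CommRing A] [Field F] [Algebra A F] {m : ℕ}
    (L : Submodule A (F × (Fin m → F))) : Set (Fin m → F) :=
  {x' | ((0 : F), x') ∈ L}

/-- The first-component image `L₁ = {x₁ : (x₁,x′) ∈ L for some x′}`. -/
def LoneSet {A F : Type*} [CommRing A] [Field F] [Algebra A F] {m : ℕ}
    (L : Submodule A (F × (Fin m → F))) : Set F :=
  {x1 | ∃ x', (x1, x') ∈ L}

/-- `Λ′ = {λ′ : x₁λ′ ∈ L′ for all x₁ ∈ v₁ + L₁}`. -/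
def LambdaPrimeSet {A F : Type*} [CommRing A] [Field F] [Algebra A F] {m : ℕ}
    (L : Submodule A (F × (Fin m → F))) (v : F × (Fin m → F)) : Set (Fin m → F) :=
  {l' | ∀ x1 : F, x1 - v.1 ∈ LoneSet L → x1 • l' ∈ LprimeSet L}

/-- The unipotent matrix action `(x₁,x′)·u(λ′) = (x₁, x₁λ′ + x′)`. -/
def uAct {F : Type*} [Field F] {m : ℕ} (l' : Fin m → F) (x : F × (Fin m → F)) :
    F × (Fin m → F) :=
  (x.1, x.1 • l' + x.2)

section Helpers

variable {A : Type*} [CommRing A]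

theorem fg_of_le_fg [IsNoetherianRing A] {V : Type*} [AddCommGroup V] [Module A V]
    {N P : Submodule A V} (hP : P.FG) (h : N ≤ P) : N.FG := by
  haveI : IsNoetherian A P := isNoetherian_of_fg_of_noetherian P hP
  have : (Submodule.comap P.subtype N).FG := IsNoetherian.noetherian _
  have hmap := this.map P.subtype
  rwa [Submodule.map_comap_subtype, inf_eq_right.2 h] at hmap

theorem exists_denom [IsDomain A] {F : Type*} [Field F] [Algebra A F] [IsFractionRing A F]
    {V : Type*} [AddCommGroup V] [Module F V] [Module A V] [IsScalarTower A F V]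
    (L : Submodule A V) {w : V} (hw : w ∈ Submodule.span F (L : Set V)) :
    ∃ b : A, b ≠ 0 ∧ b • w ∈ L := by
  induction hw using Submodule.span_induction with
  | mem x hx => exact ⟨1, one_ne_zero, by simpa using hx⟩
  | zero => exact ⟨1, one_ne_zero, by simp⟩
  | add x y _ _ hx hy =>
      obtain ⟨b, hb, hbx⟩ := hx
      obtain ⟨c, hc, hcy⟩ := hy
      refine ⟨b * c, mul_ne_zero hb hc, ?_⟩
      rw [smul_add]
      exact Submodule.add_mem _ (by rw [mul_comm, mul_smul]; exact L.smul_mem c hbx)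
        (by rw [mul_smul]; exact L.smul_mem b hcy)
  | smul f x _ hx =>
      obtain ⟨b, hb, hbx⟩ := hx
      obtain ⟨p, q, hq, hpq⟩ := IsFractionRing.div_surjective (A := A) f
      have hq0 : q ≠ 0 := nonZeroDivisors.ne_zero hq
      refine ⟨q * b, mul_ne_zero hq0 hb, ?_⟩
      have hqF : (algebraMap A F) q ≠ 0 :=
        IsFractionRing.to_map_ne_zero_of_mem_nonZeroDivisors hq
      have : (q * b : A) • (f • x) = p • (b • x) := by
        rw [← algebraMap_smul F (q * b) (f • x), ← algebraMap_smul F p (b • x),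
          ← algebraMap_smul F b x, smul_smul, smul_smul, map_mul]
        congr 1
        rw [← hpq]
        field_simp
      rw [this]
      exact L.smul_mem p hbx

theorem finite_cosets {V : Type*} [AddCommGroup V] [Module A V] (a : A)
    (hfin : Finite (A ⧸ Ideal.span ({a} : Set A))) {N : Submodule A V} (hN : N.FG) :
    ∃ T : Finset V, (T : Set V) ⊆ (N : Set V) ∧
      ∀ y ∈ N, ∃ t ∈ T, ∃ z ∈ N, y - t = a • z := by
  classical
  obtain ⟨s, hs⟩ := hN
  set I := Ideal.span ({a} : Set A) with hI
  haveI := Fintype.ofFinite (A ⧸ I)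
  set T : Finset V :=
    Finset.image (fun g : (↑s : Set V) → A ⧸ I => ∑ i ∈ s.attach, (g i).out • (i : V))
      Finset.univ with hT
  refine ⟨T, ?_, ?_⟩
  · intro t ht
    rw [hT, Finset.coe_image] at ht
    obtain ⟨g, _, rfl⟩ := ht
    refine Submodule.sum_mem _ fun i _ => Submodule.smul_mem _ _ ?_
    rw [← hs]
    exact Submodule.subset_span i.2
  · intro y hy
    rw [← hs, Submodule.mem_span_finset] at hy
    obtain ⟨c, -, hc⟩ := hy
    set g : (↑s : Set V) → A ⧸ I := fun i => Ideal.Quotient.mk I (c i) with hg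
    refine ⟨∑ i ∈ s.attach, (g i).out • (i : V), Finset.mem_image_of_mem _ (Finset.mem_univ g), ?_⟩
    have hrep : ∀ i : (↑s : Set V), ∃ d : A, c i - (g i).out = d * a := by
      intro i
      have : c i - (g i).out ∈ I := by
        rw [← Ideal.Quotient.eq_zero_iff_mem, map_sub]
        have : Ideal.Quotient.mk I (g i).out = g i := Quotient.out_eq _
        rw [this, hg, sub_self]
      obtain ⟨d, hd⟩ := Ideal.mem_span_singleton'.1 this
      exact ⟨d, hd.symm⟩
    choose d hd using hrep
    refine ⟨∑ i ∈ s.attach, d i • (i : V), ?_, ?_⟩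
    · refine Submodule.sum_mem _ fun i _ => Submodule.smul_mem _ _ ?_
      rw [← hs]; exact Submodule.subset_span i.2
    · rw [← hc, ← Finset.sum_attach s (fun i => c i • i), Finset.smul_sum, ← Finset.sum_sub_distrib]
      refine Finset.sum_congr rfl fun i _ => ?_
      rw [← sub_smul, hd, mul_comm, mul_smul]

end Helpers

/-- Lemma 13.7: description of `Λ′` as the stabilizer of `v+L` in `U(F)`;
`Λ′` is a finitely generated `A`-module spanning `F^{r-1}`; and `x₁Λ′ ⊆ L′` has finite
index for every nonzero `x₁ ∈ v₁ + L₁`. -/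
theorem lambda_prime_lemma
    (Fq : Type*) [Field Fq] [Fintype Fq]
    (A : Type*) [CommRing A] [IsDomain A] [IsDedekindDomain A] [Algebra Fq A]
    (F : Type*) [Field F] [Algebra A F] [IsFractionRing A F]
    (hfinquot : ∀ I : Ideal A, I ≠ ⊥ → Finite (A ⧸ I))
    (m : ℕ) (hm : 1 ≤ m)
    (L : Submodule A (F × (Fin m → F))) (hLfg : L.FG)
    (hLspan : Submodule.span F (L : Set (F × (Fin m → F))) = ⊤)
    (v : F × (Fin m → F)) :
    (∀ l' : Fin m → F,
        (uAct l' '' {x | x - v ∈ L} = {x | x - v ∈ L}) ↔ l' ∈ LambdaPrimeSet L v) ∧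
    (∃ N : Submodule A (Fin m → F),
        (N : Set (Fin m → F)) = LambdaPrimeSet L v ∧ N.FG ∧
        Submodule.span F (LambdaPrimeSet L v) = ⊤) ∧
    (∀ x1 : F, x1 - v.1 ∈ LoneSet L → x1 ≠ 0 →
        (∀ l' ∈ LambdaPrimeSet L v, x1 • l' ∈ LprimeSet L) ∧
        ∃ T : Finset (Fin m → F), (T : Set (Fin m → F)) ⊆ LprimeSet L ∧
          ∀ y ∈ LprimeSet L, ∃ t ∈ T, y - t ∈ (fun l' => x1 • l') '' LambdaPrimeSet L v) := by
  classical
  -- the kernel submodule L'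
  set Lp : Submodule A (Fin m → F) := L.comap (LinearMap.inr A F (Fin m → F)) with hLpdef
  have hLpmem : ∀ x' : Fin m → F, x' ∈ Lp ↔ x' ∈ LprimeSet L := by
    intro x'
    rw [hLpdef, Submodule.mem_comap, LinearMap.inr_apply]
    rfl
  have hLpset : (Lp : Set (Fin m → F)) = LprimeSet L := Set.ext hLpmem
  -- the image submodule L1
  set L1 : Submodule A F := L.map (LinearMap.fst A F (Fin m → F)) with hL1def
  have hL1mem : ∀ x1 : F, x1 ∈ L1 ↔ x1 ∈ LoneSet L := by
    intro x1
    rw [hL1def, Submodule.mem_map]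
    constructor
    · rintro ⟨⟨a, b⟩, hab, rfl⟩; exact ⟨b, hab⟩
    · rintro ⟨x', hx'⟩; exact ⟨(x1, x'), hx', rfl⟩
  have hzeroLone : (0 : F) ∈ LoneSet L := ⟨0, L.zero_mem⟩
  -- FG facts
  have hLpfg : Lp.FG := by
    refine Submodule.fg_of_fg_map_injective (LinearMap.inr A F (Fin m → F))
      LinearMap.inr_injective (fg_of_le_fg hLfg ?_)
    rw [hLpdef]
    exact Submodule.map_comap_le _ _
  have hL1fg : L1.FG := hLfg.map _
  -- the module M = A v1 + L1
  set M : Submodule A F := Submodule.span A {v.1} ⊔ L1 with hMdef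
  have hMfg : M.FG := (Submodule.fg_span_singleton v.1).sup hL1fg
  have hv1M : v.1 ∈ M := Submodule.mem_sup_left (Submodule.mem_span_singleton_self v.1)
  have hMz : ∀ z1 : F, z1 - v.1 ∈ LoneSet L → z1 ∈ M := by
    intro z1 hz1
    have : z1 = v.1 + (z1 - v.1) := by ring
    rw [this]
    exact M.add_mem hv1M (Submodule.mem_sup_right ((hL1mem _).2 hz1))
  have hMspan : M = Submodule.span A ({v.1} ∪ (L1 : Set F)) := by
    rw [Submodule.span_union, Submodule.span_eq]
  -- characterization of Λ'
  have hLam_iff : ∀ l' : Fin m → F,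
      l' ∈ LambdaPrimeSet L v ↔ ∀ c ∈ M, c • l' ∈ Lp := by
    intro l'
    constructor
    · intro hl c hc
      rw [hMspan] at hc
      induction hc using Submodule.span_induction with
      | mem z hz =>
          rcases hz with hz | hz
          · rw [Set.mem_singleton_iff] at hz
            subst hz
            exact (hLpmem _).2 (hl v.1 (by rw [sub_self]; exact hzeroLone))
          · have hz' : z ∈ LoneSet L := (hL1mem z).1 hz
            have h1 : (v.1 + z) • l' ∈ Lp :=
              (hLpmem _).2 (hl (v.1 + z) (by rwa [add_sub_cancel_left]))
            have h2 : v.1 • l' ∈ Lp :=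
              (hLpmem _).2 (hl v.1 (by rw [sub_self]; exact hzeroLone))
            have : z • l' = (v.1 + z) • l' - v.1 • l' := by rw [add_smul]; abel
            rw [this]
            exact Lp.sub_mem h1 h2
      | zero => simpa using Lp.zero_mem
      | add z w _ _ hz hw => rw [add_smul]; exact Lp.add_mem hz hw
      | smul b z _ hz =>
          have : (b • z) • l' = b • (z • l') := by
            rw [show (b • z : F) = algebraMap A F b * z from Algebra.smul_def b z, mul_smul,
              algebraMap_smul]
          rw [this]
          exact Lp.smul_mem b hz
    · intro h x1 hx1
      exact (hLpmem _).1 (h x1 (hMz x1 hx1))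
  -- Λ' as a submodule
  set Lam : Submodule A (Fin m → F) :=
    { carrier := LambdaPrimeSet L v
      add_mem' := by
        intro a b ha hb x1 hx1
        have h := Lp.add_mem ((hLpmem _).2 (ha x1 hx1)) ((hLpmem _).2 (hb x1 hx1))
        rw [← smul_add] at h
        exact (hLpmem _).1 h
      zero_mem' := by
        intro x1 hx1
        have : x1 • (0 : Fin m → F) = 0 := smul_zero x1
        exact (hLpmem _).1 (by rw [this]; exact Lp.zero_mem)
      smul_mem' := by
        intro a l' hl' x1 hx1
        have h := Lp.smul_mem a ((hLpmem _).2 (hl' x1 hx1))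
        rw [smul_comm a x1 l'] at h
        exact (hLpmem _).1 h } with hLamdef
  have hLamset : (Lam : Set (Fin m → F)) = LambdaPrimeSet L v := rfl
  have hLammem : ∀ l' : Fin m → F, l' ∈ Lam ↔ l' ∈ LambdaPrimeSet L v := fun _ => Iff.rfl
  -- a nonzero element of v1 + L1
  have hx0 : ∃ x0 : F, x0 ≠ 0 ∧ x0 - v.1 ∈ LoneSet L := by
    by_cases hv1 : v.1 = 0
    · obtain ⟨b0, hb0, hb0mem⟩ := exists_denom L (w := ((1 : F), (0 : Fin m → F)))
        (by rw [hLspan]; trivial)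
      refine ⟨algebraMap A F b0, ?_, ?_⟩
      · intro h
        exact hb0 (IsFractionRing.injective A F (by rw [h, map_zero]))
      · rw [hv1, sub_zero]
        refine ⟨0, ?_⟩
        have : b0 • ((1 : F), (0 : Fin m → F)) = (algebraMap A F b0, 0) := by
          rw [Prod.smul_mk, smul_zero, Algebra.smul_def, mul_one]
        rwa [this] at hb0mem
    · exact ⟨v.1, hv1, by rw [sub_self]; exact hzeroLone⟩
  obtain ⟨x0, hx00, hx0L⟩ := hx0
  -- generators of M
  obtain ⟨sM, hsM⟩ := hMfg
  -- Part (ii): FG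
  have hLamfg : Lam.FG := by
    let E : (Fin m → F) →ₗ[A] (Fin m → F) :=
      { toFun := fun l' => x0 • l'
        map_add' := fun a b => smul_add x0 a b
        map_smul' := fun a x => by
          simp only [RingHom.id_apply]
          exact (smul_comm a x0 x).symm }
    have hEinj : Function.Injective E := smul_right_injective (Fin m → F) hx00
    refine Submodule.fg_of_fg_map_injective E hEinj (fg_of_le_fg hLpfg ?_)
    rintro y ⟨l', hl', rfl⟩
    exact (hLpmem _).2 ((hLammem l').1 hl' x0 hx0L)
  -- Part (ii): spanning
  obtain ⟨dM, hdM⟩ := IsLocalization.exist_integer_multiples (nonZeroDivisors A) sM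
    (fun c : F => c)
  have hspanLam : Submodule.span F (LambdaPrimeSet L v) = ⊤ := by
    rw [eq_top_iff]
    rintro w -
    obtain ⟨e, he0, heL⟩ := exists_denom L (w := ((0 : F), w)) (by rw [hLspan]; trivial)
    have heLp : e • w ∈ Lp := by
      have h : e • ((0 : F), w) = ((0 : F), e • w) := by
        rw [Prod.smul_mk, smul_zero]
      rw [h] at heL
      exact heL
    set t : F := algebraMap A F (dM : A) * algebraMap A F e with htdef
    have hdM0 : algebraMap A F (dM : A) ≠ 0 :=
      IsFractionRing.to_map_ne_zero_of_mem_nonZeroDivisors dM.2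
    have he0F : algebraMap A F e ≠ 0 := by
      intro h
      exact he0 (IsFractionRing.injective A F (by rw [h, map_zero]))
    have ht0 : t ≠ 0 := mul_ne_zero hdM0 he0F
    have hkey : ∀ c ∈ M, (c * t) • w ∈ Lp := by
      intro c hc
      rw [← hsM] at hc
      induction hc using Submodule.span_induction with
      | mem z hz =>
          obtain ⟨g, hg⟩ := hdM z hz
          have h1 : z * t = algebraMap A F (g * e) := by
            have hz2 : (algebraMap A F) g = algebraMap A F (dM : A) * z :=
              hg.trans (Algebra.smul_def _ _)
            rw [map_mul, hz2, htdef]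
            ring
          rw [h1, algebraMap_smul, mul_smul]
          exact Lp.smul_mem g heLp
      | zero => simpa using Lp.zero_mem
      | add z z' _ _ hz hz' =>
          rw [add_mul, add_smul]
          exact Lp.add_mem hz hz'
      | smul b z _ hz =>
          have h1 : (b • z) * t = algebraMap A F b * (z * t) := by
            rw [Algebra.smul_def]; ring
          rw [h1, mul_smul, algebraMap_smul]
          exact Lp.smul_mem b hz
    have htw : t • w ∈ LambdaPrimeSet L v := by
      intro z1 hz1
      have h := hkey z1 (hMz z1 hz1)
      have he : z1 • (t • w) = (z1 * t) • w := smul_smul z1 t w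
      exact (hLpmem _).1 (by rw [he]; exact h)
    have hw : w = t⁻¹ • (t • w) := by
      rw [smul_smul, inv_mul_cancel₀ ht0, one_smul]
    rw [hw]
    exact Submodule.smul_mem _ _ (Submodule.subset_span htw)
  -- Part (i)
  have part1 : ∀ l' : Fin m → F,
      (uAct l' '' {x | x - v ∈ L} = {x | x - v ∈ L}) ↔ l' ∈ LambdaPrimeSet L v := by
    intro l'
    constructor
    · intro h x1 hx1
      obtain ⟨x', hx'⟩ := hx1
      have hxS : ((x1, x' + v.2) : F × (Fin m → F)) ∈ {x | x - v ∈ L} := by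
        show (x1, x' + v.2) - v ∈ L
        have he : ((x1, x' + v.2) : F × (Fin m → F)) - v = (x1 - v.1, x') := by
          rw [Prod.ext_iff]
          constructor
          · simp
          · simp
        rw [he]
        exact hx'
      have himg : uAct l' (x1, x' + v.2) ∈ {x | x - v ∈ L} := by
        rw [← h]
        exact Set.mem_image_of_mem _ hxS
      have hdiff : ((0 : F), x1 • l') =
          (uAct l' (x1, x' + v.2) - v) - ((x1, x' + v.2) - v) := by
        rw [Prod.ext_iff]
        constructor
        · simp [uAct]
        · simp [uAct]
          try abel
      show ((0 : F), x1 • l') ∈ L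
      rw [hdiff]
      exact L.sub_mem himg hxS
    · intro hl
      ext x
      simp only [Set.mem_image, Set.mem_setOf_eq]
      constructor
      · rintro ⟨y, hy, rfl⟩
        have h1 : y.1 - v.1 ∈ LoneSet L := by
          refine ⟨y.2 - v.2, ?_⟩
          have he : ((y.1 - v.1, y.2 - v.2) : F × (Fin m → F)) = y - v := by
            rw [Prod.ext_iff]; constructor <;> simp
          rw [he]
          exact hy
        have h2 : ((0 : F), y.1 • l') ∈ L := hl y.1 h1
        have he : uAct l' y - v = (y - v) + ((0 : F), y.1 • l') := by
          rw [Prod.ext_iff]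
          constructor
          · simp [uAct]
          · simp [uAct]
            try abel
        rw [he]
        exact L.add_mem hy h2
      · intro hx
        have h1 : x.1 - v.1 ∈ LoneSet L := by
          refine ⟨x.2 - v.2, ?_⟩
          have he : ((x.1 - v.1, x.2 - v.2) : F × (Fin m → F)) = x - v := by
            rw [Prod.ext_iff]; constructor <;> simp
          rw [he]
          exact hx
        have h2 : ((0 : F), x.1 • l') ∈ L := hl x.1 h1
        refine ⟨(x.1, x.2 - x.1 • l'), ?_, ?_⟩
        · have he : ((x.1, x.2 - x.1 • l') : F × (Fin m → F)) - v
              = (x - v) - ((0 : F), x.1 • l') := by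
            rw [Prod.ext_iff]
            constructor
            · simp
            · simp
              try abel
          show ((x.1, x.2 - x.1 • l') : F × (Fin m → F)) - v ∈ L
          rw [he]
          exact L.sub_mem hx h2
        · rw [Prod.ext_iff]
          constructor
          · rfl
          · show x.1 • l' + (x.2 - x.1 • l') = x.2
            abel
  refine ⟨part1, ⟨Lam, hLamset, hLamfg, hspanLam⟩, ?_⟩
  -- Part (iii)
  intro x1 hx1 hx10
  refine ⟨fun l' hl' => hl' x1 hx1, ?_⟩
  obtain ⟨aden, haden⟩ := IsLocalization.exist_integer_multiples (nonZeroDivisors A) sM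
    (fun c : F => c * x1⁻¹)
  have haden0 : (aden : A) ≠ 0 := nonZeroDivisors.ne_zero aden.2
  have hkey : ∀ c ∈ M, ∀ y ∈ Lp, (algebraMap A F (aden : A) * c * x1⁻¹) • y ∈ Lp := by
    intro c hc
    rw [← hsM] at hc
    induction hc using Submodule.span_induction with
    | mem z hz =>
        intro y hy
        obtain ⟨g, hg⟩ := haden z hz
        have h1 : algebraMap A F (aden : A) * z * x1⁻¹ = algebraMap A F g := by
          have hz2 : (algebraMap A F) g = algebraMap A F (aden : A) * (z * x1⁻¹) :=
            hg.trans (Algebra.smul_def _ _)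
          rw [hz2]
          ring
        rw [h1, algebraMap_smul]
        exact Lp.smul_mem g hy
    | zero => intro y hy; simpa using Lp.zero_mem
    | add z z' _ _ hz hz' =>
        intro y hy
        have h1 : algebraMap A F (aden : A) * (z + z') * x1⁻¹
            = algebraMap A F (aden : A) * z * x1⁻¹ + algebraMap A F (aden : A) * z' * x1⁻¹ := by
          ring
        rw [h1, add_smul]
        exact Lp.add_mem (hz y hy) (hz' y hy)
    | smul b z _ hz =>
        intro y hy
        have h1 : algebraMap A F (aden : A) * (b • z) * x1⁻¹
            = algebraMap A F b * (algebraMap A F (aden : A) * z * x1⁻¹) := by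
          rw [Algebra.smul_def]; ring
        rw [h1, mul_smul, algebraMap_smul]
        exact Lp.smul_mem b (hz y hy)
  have hlam : ∀ z ∈ Lp, (algebraMap A F (aden : A) * x1⁻¹) • z ∈ LambdaPrimeSet L v ∧
      x1 • ((algebraMap A F (aden : A) * x1⁻¹) • z) = (aden : A) • z := by
    intro z hz
    constructor
    · intro z1 hz1
      have h := hkey z1 (hMz z1 hz1) z hz
      have he : z1 • ((algebraMap A F (aden : A) * x1⁻¹) • z)
          = (algebraMap A F (aden : A) * z1 * x1⁻¹) • z := by
        rw [smul_smul]
        congr 1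
        ring
      rw [he]
      exact (hLpmem _).1 h
    · rw [smul_smul]
      have he : x1 * (algebraMap A F (aden : A) * x1⁻¹) = algebraMap A F (aden : A) := by
        field_simp
      rw [he, algebraMap_smul]
  have hIa : Ideal.span ({(aden : A)} : Set A) ≠ ⊥ := by
    rw [Ne, Ideal.span_singleton_eq_bot]
    exact haden0
  obtain ⟨T, hTsub, hTcov⟩ := finite_cosets (aden : A) (hfinquot _ hIa) hLpfg
  refine ⟨T, by rw [← hLpset]; exact hTsub, ?_⟩
  intro y hy
  obtain ⟨t, ht, z, hzLp, hyz⟩ := hTcov y ((hLpmem y).2 hy)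
  refine ⟨t, ht, (algebraMap A F (aden : A) * x1⁻¹) • z, (hlam z hzLp).1, ?_⟩
  show x1 • ((algebraMap A F (aden : A) * x1⁻¹) • z) = y - t
  rw [(hlam z hzLp).2, hyz]
end

section
/- Let R be a discrete valuation ring with fraction field Q and let r ≥ 2. Let M, M′ ⊆ Q^r be free R-submodules of rank r that span Q^r (row vectors), let v, v′ ∈ Q^r and δ ∈ GL_r(Q). Assume vδ + Mδ ⊆ v′ + M′, and assume that v ∈ M or vδ + Mδ = v′ + M′. Put K′ := {k ∈ GL_r(Q) : v′k + M′k = v′ + M′} and K := {k ∈ K′ : vδk + Mδk = vδ + Mδ}. Then {det k : k ∈ K} = {det k : k ∈ K′}. (Lemma 14.2, localized form.) -/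
open scoped BigOperators

open Matrix Submodule Set
open Module

set_option linter.unusedSectionVars false
set_option maxHeartbeats 1000000

section Aux

variable {R : Type*} [CommRing R] [IsDomain R] [IsDiscreteValuationRing R]
variable {Q : Type*} [Field Q] [Algebra R Q] [IsFractionRing R Q]
variable {r : ℕ}

/-- GL element from a linear equiv, acting by `vecMul`. -/
noncomputable def glOfEquiv (L : (Fin r → Q) ≃ₗ[Q] (Fin r → Q)) : GL (Fin r) Q :=
  ⟨(LinearMap.toMatrix' (L : (Fin r → Q) →ₗ[Q] (Fin r → Q)))ᵀ,
   (LinearMap.toMatrix' (L.symm : (Fin r → Q) →ₗ[Q] (Fin r → Q)))ᵀ,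
   by rw [← Matrix.transpose_mul, ← LinearMap.toMatrix'_comp]; simp,
   by rw [← Matrix.transpose_mul, ← LinearMap.toMatrix'_comp]; simp⟩

lemma glOfEquiv_vecMul (L : (Fin r → Q) ≃ₗ[Q] (Fin r → Q)) (x : Fin r → Q) :
    Matrix.vecMul x ((glOfEquiv L : GL (Fin r) Q) : Matrix (Fin r) (Fin r) Q) = L x := by
  show Matrix.vecMul x (LinearMap.toMatrix' (L : (Fin r → Q) →ₗ[Q] (Fin r → Q)))ᵀ = L x
  rw [Matrix.vecMul_transpose, ← Matrix.toLin'_apply, Matrix.toLin'_toMatrix']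
  rfl

lemma glOfEquiv_det (L : (Fin r → Q) ≃ₗ[Q] (Fin r → Q)) :
    Matrix.det ((glOfEquiv L : GL (Fin r) Q) : Matrix (Fin r) (Fin r) Q) =
      LinearMap.det (L : (Fin r → Q) →ₗ[Q] (Fin r → Q)) := by
  show Matrix.det (LinearMap.toMatrix' (L : (Fin r → Q) →ₗ[Q] (Fin r → Q)))ᵀ = _
  rw [Matrix.det_transpose, LinearMap.det_toMatrix']

lemma image_coe_span_subset (L : (Fin r → Q) →ₗ[Q] (Fin r → Q)) (s : Set (Fin r → Q))
    (h : ∀ x ∈ s, L x ∈ span R s) :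
    ⇑L '' ((span R s : Submodule R (Fin r → Q)) : Set (Fin r → Q)) ⊆
      ((span R s : Submodule R (Fin r → Q)) : Set (Fin r → Q)) := by
  have h1 : ⇑L = ⇑(L.restrictScalars R) := rfl
  rw [h1, ← Submodule.map_coe, SetLike.coe_subset_coe, Submodule.map_span, Submodule.span_le]
  rintro y ⟨x, hx, rfl⟩
  exact h x hx

lemma image_coe_span_eq (L : (Fin r → Q) ≃ₗ[Q] (Fin r → Q)) (s : Set (Fin r → Q))
    (h1 : ∀ x ∈ s, L x ∈ span R s) (h2 : ∀ x ∈ s, L.symm x ∈ span R s) :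
    ⇑L '' ((span R s : Submodule R (Fin r → Q)) : Set (Fin r → Q)) =
      ((span R s : Submodule R (Fin r → Q)) : Set (Fin r → Q)) := by
  refine subset_antisymm (image_coe_span_subset (L : (Fin r → Q) →ₗ[Q] (Fin r → Q)) s h1) ?_
  intro x hx
  refine ⟨L.symm x, ?_, by simp⟩
  exact image_coe_span_subset (L.symm : (Fin r → Q) →ₗ[Q] (Fin r → Q)) s h2 ⟨x, hx, rfl⟩

/-- construction of a stabilizing GL element of given unit determinant -/
lemma exists_gl_stab (e : Basis (Fin r) Q (Fin r → Q)) {n : ℕ} (f : Fin n → Fin r)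
    (a : Fin n → R) (j₀ : Fin r) (u : Rˣ) :
    ∃ k : GL (Fin r) Q,
      ((fun x => Matrix.vecMul x ((k : Matrix (Fin r) (Fin r) Q))) ''
          ((span R (Set.range ⇑e) : Submodule R (Fin r → Q)) : Set (Fin r → Q)) =
        ((span R (Set.range ⇑e) : Submodule R (Fin r → Q)) : Set (Fin r → Q))) ∧
      ((fun x => Matrix.vecMul x ((k : Matrix (Fin r) (Fin r) Q))) ''
          ((span R (Set.range fun i => a i • e (f i)) : Submodule R (Fin r → Q)) :
            Set (Fin r → Q)) =
        ((span R (Set.range fun i => a i • e (f i)) : Submodule R (Fin r → Q)) :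
          Set (Fin r → Q))) ∧
      Matrix.det (k : Matrix (Fin r) (Fin r) Q) = algebraMap R Q u := by
  classical
  set u' : Fin r → Rˣ := fun j => if j = j₀ then u else 1 with hu'
  set w : Fin r → Qˣ := fun j => Units.map (algebraMap R Q : R →* Q) (u' j) with hw
  have hwc : ∀ j, (w j : Q) = algebraMap R Q ((u' j : R)) := fun j => rfl
  have hwinv : ∀ j, ((w j)⁻¹ : Qˣ) = Units.map (algebraMap R Q : R →* Q) ((u' j)⁻¹) := by
    intro j; rw [hw]; simp
  set L : (Fin r → Q) ≃ₗ[Q] (Fin r → Q) := e.equiv (e.unitsSMul w) (Equiv.refl _) with hL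
  have hLe : ∀ j, L (e j) = (w j : Q) • e j := by
    intro j
    rw [hL, Basis.equiv_apply, Equiv.refl_apply, Basis.unitsSMul_apply, Units.smul_def]
  have hLs : ∀ j, L.symm (e j) = (((w j)⁻¹ : Qˣ) : Q) • e j := by
    intro j
    apply L.injective
    rw [LinearEquiv.apply_symm_apply, _root_.map_smul, hLe, smul_smul, Units.inv_mul, one_smul]
  have hwinvc : ∀ j, (((w j)⁻¹ : Qˣ) : Q) = algebraMap R Q ((((u' j)⁻¹ : Rˣ) : R)) := by
    intro j; rw [hwinv]; rfl
  refine ⟨glOfEquiv L, ?_, ?_, ?_⟩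
  · have : (fun x => Matrix.vecMul x ((glOfEquiv L : GL (Fin r) Q) : Matrix (Fin r) (Fin r) Q)) =
        ⇑L := funext fun x => glOfEquiv_vecMul L x
    rw [this]
    apply image_coe_span_eq
    · rintro x ⟨j, rfl⟩
      rw [hLe, hwc, algebraMap_smul]
      exact smul_mem _ _ (subset_span (Set.mem_range_self j))
    · rintro x ⟨j, rfl⟩
      rw [hLs, hwinvc, algebraMap_smul]
      exact smul_mem _ _ (subset_span (Set.mem_range_self j))
  · have : (fun x => Matrix.vecMul x ((glOfEquiv L : GL (Fin r) Q) : Matrix (Fin r) (Fin r) Q)) =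
        ⇑L := funext fun x => glOfEquiv_vecMul L x
    rw [this]
    apply image_coe_span_eq
    · rintro x ⟨i, rfl⟩
      show L (a i • e (f i)) ∈ _
      rw [← algebraMap_smul Q (a i) (e (f i)), _root_.map_smul, hLe, hwc, smul_comm,
        algebraMap_smul, algebraMap_smul]
      exact smul_mem _ _ (subset_span (Set.mem_range_self i))
    · rintro x ⟨i, rfl⟩
      show L.symm (a i • e (f i)) ∈ _
      rw [← algebraMap_smul Q (a i) (e (f i)), _root_.map_smul, hLs, hwinvc, smul_comm,
        algebraMap_smul, algebraMap_smul]
      exact smul_mem _ _ (subset_span (Set.mem_range_self i))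
  · rw [glOfEquiv_det]
    have hmat : LinearMap.toMatrix e e (L : (Fin r → Q) →ₗ[Q] (Fin r → Q)) =
        Matrix.diagonal (fun j => (w j : Q)) := by
      ext i j
      rw [LinearMap.toMatrix_apply]
      show e.repr (L (e j)) i = _
      rw [hLe, _root_.map_smul, Basis.repr_self]
      by_cases h : i = j
      · subst h; simp [Matrix.diagonal]
      · simp [Matrix.diagonal, h, Finsupp.single_apply, Ne.symm h]
    rw [← LinearMap.det_toMatrix e, hmat, Matrix.det_diagonal]
    rw [Finset.prod_eq_single j₀]
    · rw [hwc, hu']; simp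
    · intro b _ hb
      rw [hwc, hu']; simp [hb]
    · intro h; exact absurd (Finset.mem_univ j₀) h

lemma det_mem_of_stab (b : Basis (Fin r) Q (Fin r → Q)) (k : GL (Fin r) Q)
    (hk : (fun x => Matrix.vecMul x ((k : Matrix (Fin r) (Fin r) Q))) ''
        ((span R (Set.range ⇑b) : Submodule R (Fin r → Q)) : Set (Fin r → Q)) =
      ((span R (Set.range ⇑b) : Submodule R (Fin r → Q)) : Set (Fin r → Q))) :
    ∃ u : Rˣ, Matrix.det (k : Matrix (Fin r) (Fin r) Q) = algebraMap R Q u := by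
  classical
  set S : Set (Fin r → Q) :=
    ((span R (Set.range ⇑b) : Submodule R (Fin r → Q)) : Set (Fin r → Q)) with hS
  have hcomp : ∀ x : Fin r → Q,
      Matrix.vecMul (Matrix.vecMul x ((k : Matrix (Fin r) (Fin r) Q)))
        ((↑(k⁻¹) : Matrix (Fin r) (Fin r) Q)) = x := by
    intro x
    rw [Matrix.vecMul_vecMul]
    have : (k : Matrix (Fin r) (Fin r) Q) * ((↑(k⁻¹)) : Matrix (Fin r) (Fin r) Q) = 1 := by
      rw [← Matrix.GeneralLinearGroup.coe_mul, mul_inv_cancel]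
      rfl
    rw [this, Matrix.vecMul_one]
  have hcomp' : ∀ x : Fin r → Q,
      Matrix.vecMul (Matrix.vecMul x ((↑(k⁻¹) : Matrix (Fin r) (Fin r) Q)))
        ((k : Matrix (Fin r) (Fin r) Q)) = x := by
    intro x
    rw [Matrix.vecMul_vecMul]
    have : ((↑(k⁻¹)) : Matrix (Fin r) (Fin r) Q) * (k : Matrix (Fin r) (Fin r) Q) = 1 := by
      rw [← Matrix.GeneralLinearGroup.coe_mul, inv_mul_cancel]
      rfl
    rw [this, Matrix.vecMul_one]
  have hk' : (fun x => Matrix.vecMul x ((↑(k⁻¹) : Matrix (Fin r) (Fin r) Q))) '' S = S := by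
    conv_lhs => rw [← hk]
    rw [← Set.image_comp]
    have : ((fun x => Matrix.vecMul x ((↑(k⁻¹) : Matrix (Fin r) (Fin r) Q))) ∘
        (fun x => Matrix.vecMul x ((k : Matrix (Fin r) (Fin r) Q)))) = id := by
      funext x; exact hcomp x
    rw [this, Set.image_id]
  set Lk : (Fin r → Q) →ₗ[Q] (Fin r → Q) := Matrix.toLin' ((k : Matrix (Fin r) (Fin r) Q))ᵀ
    with hLk
  set Lk' : (Fin r → Q) →ₗ[Q] (Fin r → Q) := Matrix.toLin' ((↑(k⁻¹) : Matrix (Fin r) (Fin r) Q))ᵀ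
    with hLk'
  have hLkapp : ∀ x, Lk x = Matrix.vecMul x ((k : Matrix (Fin r) (Fin r) Q)) := by
    intro x; rw [hLk, Matrix.toLin'_apply, Matrix.mulVec_transpose]
  have hLk'app : ∀ x, Lk' x = Matrix.vecMul x ((↑(k⁻¹) : Matrix (Fin r) (Fin r) Q)) := by
    intro x; rw [hLk', Matrix.toLin'_apply, Matrix.mulVec_transpose]
  set A : Matrix (Fin r) (Fin r) Q := LinearMap.toMatrix b b Lk with hA
  set B : Matrix (Fin r) (Fin r) Q := LinearMap.toMatrix b b Lk' with hB
  have hmem : ∀ (L : (Fin r → Q) →ₗ[Q] (Fin r → Q)),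
      ((fun x => L x) '' S = S) → ∀ i j, (LinearMap.toMatrix b b L) i j ∈
        Set.range (algebraMap R Q) := by
    intro L hL i j
    have hbj : (b j) ∈ S := subset_span (Set.mem_range_self j)
    have : L (b j) ∈ S := by
      rw [← hL]; exact ⟨b j, hbj, rfl⟩
    rw [LinearMap.toMatrix_apply]
    exact (Basis.mem_span_iff_repr_mem R b _).mp this i
  have hAmem : ∀ i j, A i j ∈ Set.range (algebraMap R Q) := by
    refine hmem Lk ?_
    have : (fun x => Lk x) = (fun x => Matrix.vecMul x ((k : Matrix (Fin r) (Fin r) Q))) := by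
      funext x; exact hLkapp x
    rw [this]; exact hk
  have hBmem : ∀ i j, B i j ∈ Set.range (algebraMap R Q) := by
    refine hmem Lk' ?_
    have : (fun x => Lk' x) = (fun x => Matrix.vecMul x ((↑(k⁻¹) : Matrix (Fin r) (Fin r) Q))) := by
      funext x; exact hLk'app x
    rw [this]; exact hk'
  set A₀ : Matrix (Fin r) (Fin r) R := fun i j => (hAmem i j).choose with hA₀
  set B₀ : Matrix (Fin r) (Fin r) R := fun i j => (hBmem i j).choose with hB₀
  have hA₀spec : (algebraMap R Q).mapMatrix A₀ = A := by
    ext i j; exact (hAmem i j).choose_spec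
  have hB₀spec : (algebraMap R Q).mapMatrix B₀ = B := by
    ext i j; exact (hBmem i j).choose_spec
  have hAB : A * B = 1 := by
    rw [hA, hB, ← LinearMap.toMatrix_comp b b b]
    have : Lk.comp Lk' = LinearMap.id := by
      apply LinearMap.ext; intro x
      simp only [LinearMap.comp_apply, LinearMap.id_apply]
      rw [hLk'app, hLkapp]
      exact hcomp' x
    rw [this, LinearMap.toMatrix_id]
  have hA₀B₀ : A₀ * B₀ = 1 := by
    have hinj : Function.Injective (algebraMap R Q) := IsFractionRing.injective R Q
    have : (algebraMap R Q).mapMatrix (A₀ * B₀) = (algebraMap R Q).mapMatrix (1 : Matrix _ _ R) := by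
      rw [_root_.map_mul, hA₀spec, hB₀spec, hAB, _root_.map_one]
    ext i j
    have := congrFun (congrFun (congrArg (fun (M : Matrix (Fin r) (Fin r) Q) => (M : Matrix _ _ Q)) this) i) j
    exact hinj (by simpa [RingHom.mapMatrix_apply, Matrix.map_apply] using this)
  have hdetunit : IsUnit (A₀.det) := by
    apply IsUnit.of_mul_eq_one B₀.det
    rw [← Matrix.det_mul, hA₀B₀, Matrix.det_one]
  obtain ⟨u, hu⟩ := hdetunit
  refine ⟨u, ?_⟩
  have h1 : Matrix.det (k : Matrix (Fin r) (Fin r) Q) = A.det := by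
    rw [hA, LinearMap.det_toMatrix]
    rw [show LinearMap.det Lk = Matrix.det (LinearMap.toMatrix' Lk) from
      (LinearMap.det_toMatrix' Lk).symm]
    rw [hLk, LinearMap.toMatrix'_toLin', Matrix.det_transpose]
  rw [h1, ← hA₀spec, ← RingHom.map_det, hu]

end Aux

/-- Lemma 14.2, localized form: over a DVR `R` with fraction field `Q`,
the stabilizer subgroups `K ≤ K′` of the data `(v′+M′, vδ+Mδ)` have the same set of
determinants. -/
theorem det_stabilizer_eq
    (R : Type*) [CommRing R] [IsDomain R] [IsDiscreteValuationRing R]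
    (Q : Type*) [Field Q] [Algebra R Q] [IsFractionRing R Q]
    (r : ℕ) (hr : 2 ≤ r)
    (M M' : Submodule R (Fin r → Q))
    (hM : ∃ b : Module.Basis (Fin r) Q (Fin r → Q), M = Submodule.span R (Set.range b))
    (hM' : ∃ b : Module.Basis (Fin r) Q (Fin r → Q), M' = Submodule.span R (Set.range b))
    (v v' : Fin r → Q) (δ : GL (Fin r) Q)
    (hsub : (fun x => Matrix.vecMul x (δ : Matrix (Fin r) (Fin r) Q)) ''
        {x | x - v ∈ M} ⊆ {x | x - v' ∈ M'})
    (halt : v ∈ M ∨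
      (fun x => Matrix.vecMul x (δ : Matrix (Fin r) (Fin r) Q)) '' {x | x - v ∈ M} =
        {x | x - v' ∈ M'}) :
    {d : Q | ∃ k : GL (Fin r) Q,
        ((fun x => Matrix.vecMul x ((k : Matrix (Fin r) (Fin r) Q))) ''
            {x | x - v' ∈ M'} = {x | x - v' ∈ M'}) ∧
        ((fun x => Matrix.vecMul x ((k : Matrix (Fin r) (Fin r) Q))) ''
            ((fun x => Matrix.vecMul x ((δ : Matrix (Fin r) (Fin r) Q))) '' {x | x - v ∈ M}) =
          (fun x => Matrix.vecMul x ((δ : Matrix (Fin r) (Fin r) Q))) '' {x | x - v ∈ M}) ∧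
        d = Matrix.det (k : Matrix (Fin r) (Fin r) Q)} =
    {d : Q | ∃ k : GL (Fin r) Q,
        ((fun x => Matrix.vecMul x ((k : Matrix (Fin r) (Fin r) Q))) ''
            {x | x - v' ∈ M'} = {x | x - v' ∈ M'}) ∧
        d = Matrix.det (k : Matrix (Fin r) (Fin r) Q)} := by
  classical
  rcases halt with hv | hco
  swap
  · -- the coset case: the second condition is identical to the first
    ext d
    simp only [Set.mem_setOf_eq]
    constructor
    · rintro ⟨k, h1, h2, h3⟩; exact ⟨k, h1, h3⟩
    · rintro ⟨k, h1, h3⟩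
      exact ⟨k, h1, by rw [hco]; exact h1, h3⟩
  · -- v ∈ M
    -- basic coset rewrites
    have hsetP : ∀ (P : Submodule R (Fin r → Q)) (w : Fin r → Q), w ∈ P →
        {x : Fin r → Q | x - w ∈ P} = (P : Set (Fin r → Q)) := by
      intro P w hw
      ext x
      simp only [Set.mem_setOf_eq, SetLike.mem_coe]
      constructor
      · intro h; have := add_mem h hw; simpa using this
      · intro h; exact sub_mem h hw
    have hv' : v' ∈ M' := by
      have h0 : (0 : Fin r → Q) ∈ {x | x - v ∈ M} := by
        simp only [Set.mem_setOf_eq, zero_sub]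
        exact neg_mem hv
      have h1 : Matrix.vecMul (0 : Fin r → Q) ((δ : Matrix (Fin r) (Fin r) Q)) ∈
          {x | x - v' ∈ M'} := hsub ⟨0, h0, rfl⟩
      rw [Matrix.zero_vecMul] at h1
      simp only [Set.mem_setOf_eq, zero_sub] at h1
      simpa using neg_mem h1
    have hset1 : {x : Fin r → Q | x - v ∈ M} = (M : Set (Fin r → Q)) := hsetP M v hv
    have hset2 : {x : Fin r → Q | x - v' ∈ M'} = (M' : Set (Fin r → Q)) := hsetP M' v' hv'
    -- the image lattice N
    set Lδ : (Fin r → Q) →ₗ[Q] (Fin r → Q) :=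
      Matrix.toLin' ((δ : Matrix (Fin r) (Fin r) Q))ᵀ with hLδ
    have hLδapp : (fun x => Matrix.vecMul x ((δ : Matrix (Fin r) (Fin r) Q))) =
        ⇑(Lδ.restrictScalars R) := by
      funext x
      show _ = Lδ x
      rw [hLδ, Matrix.toLin'_apply, Matrix.mulVec_transpose]
    set N : Submodule R (Fin r → Q) := Submodule.map (Lδ.restrictScalars R) M with hN
    have himδ : (fun x => Matrix.vecMul x ((δ : Matrix (Fin r) (Fin r) Q))) ''
        (M : Set (Fin r → Q)) = (N : Set (Fin r → Q)) := by
      rw [hLδapp, hN, Submodule.map_coe]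
    have hNM' : N ≤ M' := by
      rw [← SetLike.coe_subset_coe, ← himδ, ← hset1, ← hset2]
      exact hsub
    -- replace M' by a span
    obtain ⟨bM', hbM'⟩ := hM'
    subst hbM'
    set P : Submodule R (Fin r → Q) := Submodule.span R (Set.range ⇑bM') with hP
    -- an R-basis of P
    have hinj : Function.Injective fun s : R => s • (1 : Q) := by
      have : (fun s : R => s • (1 : Q)) = ⇑(algebraMap R Q) := by
        funext s; exact (Algebra.algebraMap_eq_smul_one s).symm
      rw [this]
      exact IsFractionRing.injective R Q
    have hliR : LinearIndependent R ⇑bM' := bM'.linearIndependent.restrict_scalars hinj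
    set bR : Basis (Fin r) R ↥P := Basis.span hliR with hbR
    -- Smith normal form of N inside P
    obtain ⟨n, snf⟩ := Submodule.smithNormalForm bR (N.comap P.subtype)
    set e : Fin r → (Fin r → Q) := fun j => ((snf.bM j : ↥P) : Fin r → Q) with he
    have hespan : Submodule.span R (Set.range e) = P := by
      have h1 : Set.range e = ⇑P.subtype '' (Set.range ⇑snf.bM) := by
        rw [← Set.range_comp]; rfl
      rw [h1, ← Submodule.map_span, snf.bM.span_eq, Submodule.map_subtype_top]
    have hNspan : N = Submodule.span R (Set.range fun i => snf.a i • e (snf.f i)) := by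
      have h2 : Submodule.map P.subtype (N.comap P.subtype) = N := by
        rw [Submodule.map_comap_subtype]
        exact inf_eq_right.mpr hNM'
      have h4 : N.comap P.subtype =
          Submodule.span R (Set.range (⇑(N.comap P.subtype).subtype ∘ ⇑snf.bN)) := by
        conv_lhs => rw [← Submodule.map_subtype_top (N.comap P.subtype), ← snf.bN.span_eq]
        rw [Submodule.map_span, Set.range_comp]
      calc N = Submodule.map P.subtype (N.comap P.subtype) := h2.symm
        _ = Submodule.map P.subtype
              (Submodule.span R (Set.range (⇑(N.comap P.subtype).subtype ∘ ⇑snf.bN))) :=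
            congrArg (Submodule.map P.subtype) h4
        _ = Submodule.span R
              (⇑P.subtype '' Set.range (⇑(N.comap P.subtype).subtype ∘ ⇑snf.bN)) :=
            Submodule.map_span _ _
        _ = Submodule.span R
              (Set.range (⇑P.subtype ∘ (⇑(N.comap P.subtype).subtype ∘ ⇑snf.bN))) := by
            simp only [Set.range_comp]
        _ = Submodule.span R (Set.range fun i => snf.a i • e (snf.f i)) := by
            apply congrArg
            apply congrArg
            funext i
            show ((snf.bN i : ↥P) : Fin r → Q) = snf.a i • e (snf.f i)
            rw [snf.snf i]
            rfl
    -- the Q-basis made of e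
    have heQ : ⊤ ≤ Submodule.span Q (Set.range e) := by
      rw [← bM'.span_eq]
      rw [Submodule.span_le]
      rintro y ⟨j, rfl⟩
      have hmem : bM' j ∈ Submodule.span R (Set.range e) := by
        rw [hespan]
        exact Submodule.subset_span (Set.mem_range_self j)
      exact Submodule.span_subset_span R Q _ hmem
    have hcard : Fintype.card (Fin r) = Module.finrank Q (Fin r → Q) := by
      rw [Module.finrank_fintype_fun_eq_card]
    set eB : Basis (Fin r) Q (Fin r → Q) := basisOfTopLeSpanOfCardEqFinrank e heQ hcard with heB
    have heBe : ⇑eB = e := coe_basisOfTopLeSpanOfCardEqFinrank e heQ hcard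
    -- now prove the set equality
    apply Set.Subset.antisymm
    · rintro d ⟨k, h1, h2, h3⟩
      exact ⟨k, h1, h3⟩
    · rintro d ⟨k, h1, h3⟩
      rw [hset2] at h1
      obtain ⟨u, hu⟩ := det_mem_of_stab bM' k h1
      have hj₀ : (0 : ℕ) < r := by omega
      obtain ⟨k₁, hc1, hc2, hc3⟩ := exists_gl_stab eB (⇑snf.f) snf.a ⟨0, hj₀⟩ u
      rw [heBe, hespan] at hc1
      rw [heBe, ← hNspan] at hc2
      refine ⟨k₁, ?_, ?_, ?_⟩
      · rw [hset2]
        exact hc1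
      · rw [hset1, himδ]
        exact hc2
      · rw [h3, hu, hc3]
end

section
/- Let q be a prime power, r ≥ 1 an integer, and μ : {1,…,r} → ℕ any function. Then P := {g ∈ GL_r(𝔽_q) : g_{ij} = 0 for all i, j with μ(j) > μ(i)} is a subgroup of GL_r(𝔽_q), and its index [GL_r(𝔽_q) : P] is congruent to 1 modulo q. (Parabolic index claim in the proof of Lemma 14.5.) -/
open Matrix Finset

set_option linter.unusedSectionVars false
set_option maxHeartbeats 1000000

section ParabolicAux

variable {Fq : Type*} [Field Fq] [Fintype Fq] {r : ℕ} (μ : Fin r → ℕ)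

private lemma cond_iff_bt (M : Matrix (Fin r) (Fin r) Fq) :
    (∀ i j, μ j > μ i → M i j = 0) ↔ M.BlockTriangular (OrderDual.toDual ∘ μ) := by
  constructor
  · intro h i j hij
    exact h i j hij
  · intro h i j hij
    exact h hij

private def parabolicAux : Subgroup (GL (Fin r) Fq) where
  carrier := {g : GL (Fin r) Fq | ∀ i j, μ j > μ i → (g : Matrix (Fin r) (Fin r) Fq) i j = 0}
  one_mem' := by
    rw [Set.mem_setOf_eq, cond_iff_bt]
    exact Matrix.blockTriangular_one
  mul_mem' := by
    intro a b ha hb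
    rw [Set.mem_setOf_eq, cond_iff_bt] at *
    rw [Units.val_mul]
    exact ha.mul hb
  inv_mem' := by
    intro a ha
    rw [Set.mem_setOf_eq, cond_iff_bt] at *
    rw [Matrix.coe_units_inv]
    haveI : Invertible (a : Matrix (Fin r) (Fin r) Fq) := a.invertible
    exact Matrix.blockTriangular_inv_of_blockTriangular ha

private def matEquiv :
    {M : Matrix (Fin r) (Fin r) Fq // ∀ i j, μ i < μ j → M i j = 0} ≃
      ({p : Fin r × Fin r // μ p.2 < μ p.1} → Fq) ×
        (∀ a : (univ.image μ : Finset ℕ), Matrix {i // μ i = (a : ℕ)} {i // μ i = (a : ℕ)} Fq) where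
  toFun M := ⟨fun p => M.1 p.1.1 p.1.2, fun _ i j => M.1 i.1 j.1⟩
  invFun fg := ⟨fun i j =>
      if h : μ i = μ j then
        fg.2 ⟨μ i, Finset.mem_image_of_mem μ (Finset.mem_univ i)⟩ ⟨i, rfl⟩ ⟨j, h.symm⟩
      else if h2 : μ j < μ i then fg.1 ⟨(i, j), h2⟩ else 0, by
    intro i j hij
    dsimp only
    rw [dif_neg (Nat.ne_of_lt hij), dif_neg (Nat.lt_asymm hij)]⟩
  left_inv := by
    intro ⟨M, hM⟩
    ext i j
    simp only
    by_cases h : μ i = μ j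
    · rw [dif_pos h]
    · by_cases h2 : μ j < μ i
      · rw [dif_neg h, dif_pos h2]
      · rw [dif_neg h, dif_neg h2, hM i j (lt_of_le_of_ne (Nat.le_of_not_lt h2) h)]
  right_inv := by
    intro ⟨f, g⟩
    refine Prod.ext (funext fun p => ?_) (funext fun a => ?_)
    · simp only
      rw [dif_neg (Nat.ne_of_lt p.2).symm, dif_pos p.2]
    · funext i j
      obtain ⟨a, ha⟩ := a
      obtain ⟨i, hi⟩ := i
      obtain ⟨j, hj⟩ := j
      dsimp only at hi hj ⊢
      subst hi
      rw [dif_pos hj.symm]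

private noncomputable def glEquivDet (m : Type*) [Fintype m] [DecidableEq m] :
    GL m Fq ≃ {N : Matrix m m Fq // N.det ≠ 0} where
  toFun g := ⟨g, ((Matrix.isUnit_iff_isUnit_det _).1 g.isUnit).ne_zero⟩
  invFun N := Matrix.GeneralLinearGroup.mk'' N.1 (isUnit_iff_ne_zero.2 N.2)
  left_inv g := by
    apply Units.ext
    simp [Matrix.GeneralLinearGroup.mk'', Matrix.nonsingInvUnit]
  right_inv N := by
    apply Subtype.ext
    simp [Matrix.GeneralLinearGroup.mk'', Matrix.nonsingInvUnit]

private lemma glCardReindex (m : Type*) [Fintype m] [DecidableEq m] :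
    Nat.card (GL m Fq) = Nat.card (GL (Fin (Fintype.card m)) Fq) :=
  Nat.card_congr (Units.mapEquiv
    (Matrix.reindexAlgEquiv Fq Fq (Fintype.equivFin m)).toRingEquiv.toMulEquiv).toEquiv

private lemma det_ne_iff (M : Matrix (Fin r) (Fin r) Fq)
    (hM : ∀ i j, μ i < μ j → M i j = 0) :
    M.det ≠ 0 ↔ ∀ a : (univ.image μ : Finset ℕ), (M.toSquareBlock μ (a : ℕ)).det ≠ 0 := by
  have hbt : Mᵀ.BlockTriangular μ := fun i j h => hM j i h
  rw [← Matrix.det_transpose M, hbt.det, Finset.prod_ne_zero_iff]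
  constructor
  · intro h a
    have := h a.1 a.2
    rwa [show Mᵀ.toSquareBlock μ a.1 = (M.toSquareBlock μ a.1)ᵀ from rfl,
      Matrix.det_transpose] at this
  · intro h a ha
    have := h ⟨a, ha⟩
    rwa [show Mᵀ.toSquareBlock μ a = (M.toSquareBlock μ a)ᵀ from rfl,
      Matrix.det_transpose]

private def prodSubtypeEquiv {A B : Type*} (P : B → Prop) :
    {x : A × B // P x.2} ≃ A × {b : B // P b} where
  toFun x := (x.1.1, ⟨x.1.2, x.2⟩)
  invFun y := ⟨(y.1, y.2.1), y.2.2⟩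
  left_inv _ := rfl
  right_inv _ := rfl

private noncomputable def fullEquiv :
    {M : Matrix (Fin r) (Fin r) Fq // (∀ i j, μ i < μ j → M i j = 0) ∧ M.det ≠ 0} ≃
      ({p : Fin r × Fin r // μ p.2 < μ p.1} → Fq) ×
        (∀ a : (univ.image μ : Finset ℕ), GL {i // μ i = (a : ℕ)} Fq) :=
  ((Equiv.subtypeSubtypeEquivSubtypeInter _ _).symm.trans
    (((matEquiv μ).subtypeEquiv (fun x => det_ne_iff μ x.1 x.2)).trans
      ((prodSubtypeEquiv _).trans
        (Equiv.prodCongrRight (fun _ => Equiv.subtypePiEquivPi.trans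
          (Equiv.piCongrRight (fun _ => (glEquivDet _).symm)))))))

private lemma card_set :
    Nat.card {M : Matrix (Fin r) (Fin r) Fq // (∀ i j, μ i < μ j → M i j = 0) ∧ M.det ≠ 0} =
      Fintype.card Fq ^ (Fintype.card {p : Fin r × Fin r // μ p.2 < μ p.1}) *
        ∏ a ∈ univ.image μ, Nat.card (GL (Fin (Fintype.card {i // μ i = a})) Fq) := by
  rw [Nat.card_congr (fullEquiv μ), Nat.card_prod, Nat.card_fun, Nat.card_pi]
  congr 1
  · rw [Nat.card_eq_fintype_card, Nat.card_eq_fintype_card]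
  · rw [← Finset.prod_coe_sort (univ.image μ)
      (fun a => Nat.card (GL (Fin (Fintype.card {i // μ i = a})) Fq))]
    exact Finset.prod_congr rfl fun a _ => glCardReindex _

private noncomputable def subgroupEquiv :
    ↥(parabolicAux (Fq := Fq) μ) ≃
      {M : Matrix (Fin r) (Fin r) Fq // (∀ i j, μ i < μ j → M i j = 0) ∧ M.det ≠ 0} where
  toFun g := ⟨(g : GL (Fin r) Fq), fun i j h => g.2 i j h,
    ((Matrix.isUnit_iff_isUnit_det _).1 (g : GL (Fin r) Fq).isUnit).ne_zero⟩
  invFun M := ⟨Matrix.GeneralLinearGroup.mk'' M.1 (isUnit_iff_ne_zero.2 M.2.2),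
    fun i j h => M.2.1 i j h⟩
  left_inv g := by
    apply Subtype.ext
    apply Units.ext
    rfl
  right_inv M := by
    apply Subtype.ext
    rfl

private lemma card_GL_eq (n : ℕ) :
    Nat.card (GL (Fin n) Fq) =
      Fintype.card Fq ^ (∑ i ∈ range n, i) *
        ∏ i ∈ range n, (Fintype.card Fq ^ (n - i) - 1) := by
  rw [Matrix.card_GL_field,
    Fin.prod_univ_eq_prod_range (fun i => Fintype.card Fq ^ n - Fintype.card Fq ^ i) n,
    ← Finset.prod_pow_eq_pow_sum, ← Finset.prod_mul_distrib]
  refine Finset.prod_congr rfl fun i hi => ?_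
  rw [Nat.mul_sub, mul_one, ← pow_add]
  congr 2
  exact (Nat.add_sub_cancel' (Finset.mem_range.1 hi).le).symm

private lemma prod_cast_mod (q n : ℕ) (hq : 2 ≤ q) :
    ((∏ i ∈ range n, (q ^ (n - i) - 1) : ℕ) : ZMod q) = (-1) ^ n := by
  rw [Nat.cast_prod]
  have : ∀ i ∈ range n, ((q ^ (n - i) - 1 : ℕ) : ZMod q) = (-1 : ZMod q) := by
    intro i hi
    rw [Nat.cast_sub (Nat.one_le_pow _ _ (by omega)), Nat.cast_pow, Nat.cast_one,
      ZMod.natCast_self, zero_pow (by have := Finset.mem_range.1 hi; omega), zero_sub]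
  rw [Finset.prod_congr rfl this, Finset.prod_const, Finset.card_range]

private lemma sum_fibers : r = ∑ a ∈ univ.image μ, (univ.filter (fun i => μ i = a)).card := by
  have := Finset.card_eq_sum_card_fiberwise
    (f := μ) (s := (univ : Finset (Fin r))) (t := univ.image μ)
    (fun x _ => Finset.mem_image_of_mem μ (Finset.mem_univ x))
  simpa using this

private lemma square_split :
    r * r = (univ.filter (fun p : Fin r × Fin r => μ p.2 < μ p.1)).card +
      (univ.filter (fun p : Fin r × Fin r => μ p.2 < μ p.1)).card +
      ∑ a ∈ univ.image μ, (univ.filter (fun i => μ i = a)).card *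
        (univ.filter (fun i => μ i = a)).card := by
  have t1 := Finset.card_filter_add_card_filter_not
    (s := (univ : Finset (Fin r × Fin r))) (fun p => μ p.2 < μ p.1)
  have t2 := Finset.card_filter_add_card_filter_not
    (s := univ.filter (fun p : Fin r × Fin r => ¬ μ p.2 < μ p.1)) (fun p => μ p.1 < μ p.2)
  rw [Finset.filter_filter, Finset.filter_filter] at t2
  have e1 : (univ.filter (fun p : Fin r × Fin r => ¬ μ p.2 < μ p.1 ∧ μ p.1 < μ p.2)) =
      univ.filter (fun p : Fin r × Fin r => μ p.1 < μ p.2) := by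
    apply Finset.filter_congr
    intro p _
    exact ⟨fun h => h.2, fun h => ⟨Nat.lt_asymm h, h⟩⟩
  have e2 : (univ.filter (fun p : Fin r × Fin r => ¬ μ p.2 < μ p.1 ∧ ¬ μ p.1 < μ p.2)) =
      univ.filter (fun p : Fin r × Fin r => μ p.1 = μ p.2) := by
    apply Finset.filter_congr
    intro p _
    constructor
    · intro h
      omega
    · intro h
      exact ⟨by omega, by omega⟩
  rw [e1, e2] at t2
  have e3 : (univ.filter (fun p : Fin r × Fin r => μ p.1 < μ p.2)).card =
      (univ.filter (fun p : Fin r × Fin r => μ p.2 < μ p.1)).card := by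
    apply Finset.card_bij (fun p _ => Prod.swap p)
    · intro p hp
      simp only [Finset.mem_filter, Finset.mem_univ, true_and] at hp ⊢
      exact hp
    · intro p _ p' _ h
      exact Prod.swap_injective h
    · intro p hp
      refine ⟨p.swap, ?_, by simp⟩
      simp only [Finset.mem_filter, Finset.mem_univ, true_and] at hp ⊢
      exact hp
  have e4 : (univ.filter (fun p : Fin r × Fin r => μ p.1 = μ p.2)).card =
      ∑ a ∈ univ.image μ, (univ.filter (fun i => μ i = a)).card *
        (univ.filter (fun i => μ i = a)).card := by
    rw [Finset.card_eq_sum_card_fiberwise (f := fun p : Fin r × Fin r => μ p.1)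
      (t := univ.image μ) (fun p _ => Finset.mem_image_of_mem μ (Finset.mem_univ p.1))]
    refine Finset.sum_congr rfl fun a _ => ?_
    rw [Finset.filter_filter]
    have : (univ.filter (fun p : Fin r × Fin r => (μ p.1 = μ p.2) ∧ μ p.1 = a)) =
        (univ.filter (fun i : Fin r => μ i = a)) ×ˢ (univ.filter (fun i : Fin r => μ i = a)) := by
      rw [← Finset.filter_product, Finset.univ_product_univ]
      apply Finset.filter_congr
      intro p _
      constructor
      · rintro ⟨h1, h2⟩
        exact ⟨h2, h1 ▸ h2⟩
      · rintro ⟨h1, h2⟩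
        exact ⟨h1.trans h2.symm, h1⟩
    rw [this, Finset.card_product]
  have hcard : (univ : Finset (Fin r × Fin r)).card = r * r := by
    simp [Fintype.card_prod]
  omega

private lemma exp_identity :
    Fintype.card {p : Fin r × Fin r // μ p.2 < μ p.1} +
      ∑ a ∈ univ.image μ, (∑ i ∈ range (Fintype.card {i // μ i = a}), i) =
      ∑ i ∈ range r, i := by
  have key : ∀ n : ℕ, n * (n - 1) + n = n * n := by
    intro n
    cases n with
    | zero => rfl
    | succ k => simp [Nat.succ_sub_one]; ring
  apply Nat.eq_of_mul_eq_mul_right (show 0 < 2 by norm_num)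
  rw [add_mul, Finset.sum_mul, Finset.sum_range_id_mul_two]
  have hsub : ∀ a, Fintype.card {i : Fin r // μ i = a} = (univ.filter (fun i => μ i = a)).card :=
    fun a => Fintype.card_subtype _
  have hs : Fintype.card {p : Fin r × Fin r // μ p.2 < μ p.1} =
      (univ.filter (fun p : Fin r × Fin r => μ p.2 < μ p.1)).card := Fintype.card_subtype _
  simp only [Finset.sum_range_id_mul_two, hsub, hs]
  have h1 := sum_fibers μ
  have h2 := square_split μ
  have h3 : ∑ a ∈ univ.image μ, ((univ.filter (fun i => μ i = a)).card *
      ((univ.filter (fun i => μ i = a)).card - 1) + (univ.filter (fun i => μ i = a)).card) =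
      ∑ a ∈ univ.image μ, (univ.filter (fun i => μ i = a)).card *
        (univ.filter (fun i => μ i = a)).card :=
    Finset.sum_congr rfl fun a _ => key _
  rw [Finset.sum_add_distrib] at h3
  have h4 := key r
  omega

end ParabolicAux

/-- parabolic index claim in the proof of Lemma 14.5: the set
`P = {g ∈ GL_r(𝔽_q) : g_{ij} = 0 whenever μ(j) > μ(i)}` is a subgroup of `GL_r(𝔽_q)`
whose index is congruent to `1` modulo `q`. -/
theorem parabolic_index_modeq_one
    (Fq : Type*) [Field Fq] [Fintype Fq] (q : ℕ) (hq : q = Fintype.card Fq)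
    (r : ℕ) (hr : 1 ≤ r) (μ : Fin r → ℕ) :
    ∃ H : Subgroup (GL (Fin r) Fq),
      (H : Set (GL (Fin r) Fq)) =
        {g : GL (Fin r) Fq | ∀ i j, μ j > μ i → (g : Matrix (Fin r) (Fin r) Fq) i j = 0} ∧
      H.index ≡ 1 [MOD q] := by
  subst hq
  set c := Fintype.card Fq with hc
  have hc2 : 2 ≤ c := Fintype.one_lt_card
  refine ⟨parabolicAux μ, rfl, ?_⟩
  -- notation
  set S := Fintype.card {p : Fin r × Fin r // μ p.2 < μ p.1} with hS
  set n : ℕ → ℕ := fun a => Fintype.card {i : Fin r // μ i = a} with hn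
  set E := ∑ i ∈ range r, i with hE
  set U := ∏ a ∈ univ.image μ, ∏ i ∈ range (n a), (c ^ (n a - i) - 1) with hU
  set V := ∏ i ∈ range r, (c ^ (r - i) - 1) with hV
  have hIdx := Subgroup.index_mul_card (parabolicAux (Fq := Fq) μ)
  have hH : Nat.card ↥(parabolicAux (Fq := Fq) μ) = c ^ E * U := by
    rw [Nat.card_congr (subgroupEquiv μ), card_set μ]
    have : ∀ a ∈ univ.image μ, Nat.card (GL (Fin (n a)) Fq) =
        c ^ (∑ i ∈ range (n a), i) * ∏ i ∈ range (n a), (c ^ (n a - i) - 1) :=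
      fun a _ => card_GL_eq (n a)
    rw [Finset.prod_congr rfl this, Finset.prod_mul_distrib, Finset.prod_pow_eq_pow_sum,
      ← mul_assoc, ← pow_add, exp_identity μ]
  have hG : Nat.card (GL (Fin r) Fq) = c ^ E * V := card_GL_eq r
  have hIU : (parabolicAux (Fq := Fq) μ).index * U = V := by
    apply Nat.eq_of_mul_eq_mul_left (show 0 < c ^ E from pow_pos (by omega) E)
    calc c ^ E * ((parabolicAux (Fq := Fq) μ).index * U)
        = (parabolicAux (Fq := Fq) μ).index * (c ^ E * U) := by ring
      _ = c ^ E * V := by rw [← hH, hIdx, hG]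
  -- pass to ZMod c
  have hcast := congrArg (fun x : ℕ => (x : ZMod c)) hIU
  simp only [Nat.cast_mul] at hcast
  have hUc : (U : ZMod c) = (-1) ^ r := by
    rw [hU, Nat.cast_prod]
    have : ∀ a ∈ univ.image μ,
        ((∏ i ∈ range (n a), (c ^ (n a - i) - 1) : ℕ) : ZMod c) = (-1 : ZMod c) ^ (n a) :=
      fun a _ => prod_cast_mod c (n a) hc2
    rw [Finset.prod_congr rfl this, Finset.prod_pow_eq_pow_sum]
    congr 1
    have := sum_fibers μ
    simp only [hn]
    rw [Finset.sum_congr rfl (fun a _ => Fintype.card_subtype (fun i : Fin r => μ i = a))]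
    omega
  have hVc : (V : ZMod c) = (-1) ^ r := prod_cast_mod c r hc2
  rw [hUc, hVc] at hcast
  have hu : IsUnit ((-1 : ZMod c) ^ r) := (isUnit_one.neg).pow r
  have h1 : ((parabolicAux (Fq := Fq) μ).index : ZMod c) = ((1 : ℕ) : ZMod c) := by
    rw [Nat.cast_one]
    exact hu.mul_right_cancel (by rw [hcast, one_mul])
  exact (ZMod.natCast_eq_natCast_iff _ _ _).1 h1
end

section
/- For every γ ∈ GL_r(F), the module Lγ is again a finitely generated A-submodule of F^r spanning F^r and strongly discrete as a subgroup of F_∞^r, and for every integer k ≥ 0 and every ω ∈ Ω^r one has j(γ,ω)^{−(q^k−1)}·g^L_{N,k}(γ(ω)) = g^{Lγ}_{N,k}(ω), i.e. g^L_{N,k}|_{q^k−1} γ = g^{Lγ}_{N,k}, where g^{Lγ}_{N,k} is defined using the lattice Lγ and the same element N*. (Proposition 15.3(a).) -/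
open scoped BigOperators

/-- The exponential function `e_Λ(z) = z·∏_{λ ∈ Λ, λ ≠ 0} (1 - z/λ)` of a subset `Λ ⊆ K`. -/
noncomputable def expF {K : Type*} [NormedField K] (Λ : Set K) (z : K) : K :=
  z * ∏' l : {l : K // l ∈ Λ ∧ l ≠ 0}, (1 - z / (l : K))

/-- `a⁻¹L = {x : a•x ∈ L}`. -/
def invSc {K : Type*} [Field K] {r : ℕ} (a : K) (L : Set (Fin r → K)) : Set (Fin r → K) :=
  {x | a • x ∈ L}

/-- `N⁻¹L = {x : b•x ∈ L for all b ∈ N}`, for an ideal `N` of a subring `A ⊆ K`. -/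
def invIdl {K : Type*} [Field K] {A : Subring K} {r : ℕ} (N : Ideal A)
    (L : Set (Fin r → K)) : Set (Fin r → K) :=
  {x | ∀ b : A, b ∈ N → (b : K) • x ∈ L}

/-- `R` contains exactly one element of each coset of `L` in `S` other than `L` itself. -/
def IsRepSet {K : Type*} [Field K] {r : ℕ} (L S : Set (Fin r → K))
    (R : Finset (Fin r → K)) : Prop :=
  (R : Set (Fin r → K)) ⊆ S \ L ∧ ∀ x ∈ S, x ∉ L → ∃! y, y ∈ R ∧ x - y ∈ L

/-- The discriminant value `a · ∏_{w ∈ R} e_{Lω}(wω)⁻¹`. -/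
noncomputable def discVal {K : Type*} [NormedField K] {r : ℕ} (a : K)
    (L : Set (Fin r → K)) (R : Finset (Fin r → K)) (ω : Fin r → K) : K :=
  a * ∏ w ∈ R, (expF ((fun x => rvPair x ω) '' L) (rvPair w ω))⁻¹

/-- The last index of `Fin r`. -/
def lastIdx (r : ℕ) (hr : 0 < r) : Fin r := ⟨r - 1, by omega⟩

/-- The factor of automorphy `j(γ,ω) = ξ⁻¹ · (last entry of γω)`. -/
noncomputable def jfac {K : Type*} [Field K] {r : ℕ} (hr : 0 < r) (ξ : K)
    (γ : Matrix (Fin r) (Fin r) K) (ω : Fin r → K) : K :=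
  ξ⁻¹ * (γ.mulVec ω) (lastIdx r hr)

/-- The action `γ(ω) = j(γ,ω)⁻¹ · γω`. -/
noncomputable def actOmega {K : Type*} [Field K] {r : ℕ} (hr : 0 < r) (ξ : K)
    (γ : Matrix (Fin r) (Fin r) K) (ω : Fin r → K) : Fin r → K :=
  (jfac hr ξ γ ω)⁻¹ • γ.mulVec ω

/-- The Drinfeld period domain `Ω^r`. -/
def OmegaSet {K : Type*} [Field K] (r : ℕ) (hr : 0 < r) (Finf : Subfield K) (ξ : K) :
    Set (Fin r → K) :=
  {ω | (∀ x : Fin r → K, (∀ i, x i ∈ Finf) → rvPair x ω = 0 → x = 0) ∧ ω (lastIdx r hr) = ξ}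

/-- The coefficient form value `g^M_{N,k}(ω)`: the coefficient of `X^{q^k}` in
`ψ^{Mω}_N(X) = N*·X·∏_{w∈R}(1 − e_{Mω}(wω)⁻¹·X)`. -/
noncomputable def gCoef {K : Type*} [NormedField K] {r : ℕ} (M : Set (Fin r → K))
    (R : Finset (Fin r → K)) (Nstar : K) (q k : ℕ) (ω : Fin r → K) : K :=
  Polynomial.coeff (Polynomial.C Nstar * Polynomial.X *
    ∏ w ∈ R, (1 - Polynomial.C ((expF ((fun x => rvPair x ω) '' M) (rvPair w ω))⁻¹) *
      Polynomial.X)) (q ^ k)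


section Helpers
open Polynomial Filter Topology

lemma mult_of_tendsto_one {K : Type*} [NontriviallyNormedField K] [IsUltrametricDist K]
    [CompleteSpace K] {ι : Type*} (f : ι → K) (h : Tendsto f cofinite (𝓝 1)) :
    Multipliable f := by
  have hfin : ∀ ε > (0:ℝ), {i | ¬ ‖f i - 1‖ < ε}.Finite := by
    intro ε hε
    have := Metric.tendsto_nhds.mp h ε hε
    rw [eventually_cofinite] at this
    simpa [dist_eq_norm] using this
  classical
  set s₁ : Finset ι := (hfin 1 one_pos).toFinset with hs₁
  have hbd : ∀ i ∉ s₁, ‖f i‖ ≤ 1 := by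
    intro i hi
    simp only [hs₁, Set.Finite.mem_toFinset, Set.mem_setOf_eq, not_not] at hi
    have : f i = 1 + (f i - 1) := by ring
    rw [this]
    exact (IsUltrametricDist.norm_add_le_max _ _).trans (by simp [le_of_lt hi])
  have key : ∀ (δ : ℝ), 0 ≤ δ → ∀ u : Finset ι,
      (∀ i ∈ u, ‖f i - 1‖ ≤ δ ∧ ‖f i‖ ≤ 1) → ‖∏ i ∈ u, f i - 1‖ ≤ δ := by
    intro δ hδ u
    induction u using Finset.induction_on with
    | empty => simp [hδ]
    | @insert a u' hx ih =>
      intro hu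
      have h1 := hu a (Finset.mem_insert_self a u')
      have h2 : ‖∏ i ∈ u', f i - 1‖ ≤ δ := ih fun i hi => hu i (Finset.mem_insert_of_mem hi)
      rw [Finset.prod_insert hx]
      have : f a * ∏ i ∈ u', f i - 1 = f a * (∏ i ∈ u', f i - 1) + (f a - 1) := by ring
      rw [this]
      refine (IsUltrametricDist.norm_add_le_max _ _).trans (max_le ?_ h1.1)
      rw [norm_mul]
      calc ‖f a‖ * ‖∏ i ∈ u', f i - 1‖ ≤ 1 * δ := mul_le_mul h1.2 h2 (norm_nonneg _) zero_le_one
      _ = δ := one_mul δ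
  have hcauchy : CauchySeq (fun s : Finset ι => ∏ i ∈ s, f i) := by
    rw [Metric.cauchySeq_iff']
    intro ε hε
    set B := ‖∏ i ∈ s₁, f i‖ with hB
    have hBnn : 0 ≤ B := norm_nonneg _
    set δ : ℝ := min 1 (ε / (B + 1)) with hδdef
    have hδpos : 0 < δ := lt_min one_pos (div_pos hε (by linarith))
    set s₂ : Finset ι := (hfin δ hδpos).toFinset with hs₂
    refine ⟨s₁ ∪ s₂, fun s hs => ?_⟩
    have hsub : s₁ ∪ s₂ ⊆ s := hs
    rw [dist_eq_norm, ← Finset.prod_sdiff hsub]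
    have e1 : ((∏ i ∈ s \ (s₁ ∪ s₂), f i) * ∏ i ∈ s₁ ∪ s₂, f i) - ∏ i ∈ s₁ ∪ s₂, f i
        = ((∏ i ∈ s \ (s₁ ∪ s₂), f i) - 1) * ∏ i ∈ s₁ ∪ s₂, f i := by ring
    rw [e1, norm_mul]
    have hnormN : ‖∏ i ∈ s₁ ∪ s₂, f i‖ ≤ B := by
      rw [← Finset.prod_sdiff (Finset.subset_union_left (s₂ := s₂)), norm_mul, hB]
      have h1 : ‖∏ i ∈ (s₁ ∪ s₂) \ s₁, f i‖ ≤ 1 := by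
        rw [norm_prod]; refine Finset.prod_le_one ?_ ?_
        · intro i _; exact norm_nonneg _
        · intro i hi; exact hbd i (Finset.mem_sdiff.mp hi).2
      nlinarith [norm_nonneg (∏ i ∈ s₁, f i)]
    have hprodsmall : ‖(∏ i ∈ s \ (s₁ ∪ s₂), f i) - 1‖ ≤ δ := by
      refine key δ (le_of_lt hδpos) _ fun i hi => ?_
      have hi' := Finset.mem_sdiff.mp hi
      have hns₁ : i ∉ s₁ := fun hc => hi'.2 (Finset.mem_union_left _ hc)
      have hns₂ : i ∉ s₂ := fun hc => hi'.2 (Finset.mem_union_right _ hc)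
      simp only [hs₂, Set.Finite.mem_toFinset, Set.mem_setOf_eq, not_not] at hns₂
      exact ⟨le_of_lt hns₂, hbd i hns₁⟩
    calc ‖(∏ i ∈ s \ (s₁ ∪ s₂), f i) - 1‖ * ‖∏ i ∈ s₁ ∪ s₂, f i‖ ≤ δ * B :=
          mul_le_mul hprodsmall hnormN (norm_nonneg _) (le_of_lt hδpos)
    _ ≤ (ε / (B + 1)) * B := mul_le_mul_of_nonneg_right (min_le_right _ _) hBnn
    _ < ε := by
          rw [div_mul_eq_mul_div, div_lt_iff₀ (by linarith)]
          nlinarith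
  obtain ⟨a, ha⟩ := cauchySeq_tendsto_of_complete hcauchy
  exact ⟨a, ha⟩


lemma expF_factors_tendsto {K : Type*} [NontriviallyNormedField K]
    {Λ : Set K} (hΛ : StronglyDiscrete Λ) (z : K) :
    Tendsto (fun l : {l : K // l ∈ Λ ∧ l ≠ 0} => 1 - z / (l : K)) cofinite (𝓝 1) := by
  rw [Metric.tendsto_nhds]
  intro ε hε
  rw [eventually_cofinite]
  have : {l : {l : K // l ∈ Λ ∧ l ≠ 0} | ¬ dist (1 - z / (l:K)) 1 < ε} ⊆
      Subtype.val ⁻¹' (Λ ∩ Metric.closedBall 0 (‖z‖ / ε)) := by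
    intro l hl
    simp only [Set.mem_setOf_eq, not_lt, dist_eq_norm] at hl
    have h1 : ε ≤ ‖z / (l:K)‖ := by
      calc ε ≤ ‖1 - z/(l:K) - 1‖ := by simpa using hl
      _ = ‖z/(l:K)‖ := by rw [show (1:K) - z/(l:K) - 1 = -(z/(l:K)) by ring, norm_neg]
    have hlne : ((l:K)) ≠ 0 := l.2.2
    have hlpos : 0 < ‖(l:K)‖ := norm_pos_iff.mpr hlne
    rw [norm_div] at h1
    refine Set.mem_preimage.mpr ⟨l.2.1, Metric.mem_closedBall.mpr ?_⟩
    rw [dist_zero_right, le_div_iff₀ hε]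
    calc ‖(l:K)‖ * ε ≤ ‖(l:K)‖ * (‖z‖ / ‖(l:K)‖) :=
      mul_le_mul_of_nonneg_left h1 (le_of_lt hlpos)
    _ = ‖z‖ := by field_simp
  exact Set.Finite.subset
    (Set.Finite.preimage (Set.injOn_of_injective Subtype.val_injective)
      (hΛ _ Metric.isBounded_closedBall)) this

lemma expF_smul' {K : Type*} [NormedField K] (Λ : Set K) {c : K} (hc : c ≠ 0) (z : K) :
    expF ((fun t => c * t) '' Λ) (c * z) = c * expF Λ z := by
  unfold expF
  let e : {l : K // l ∈ Λ ∧ l ≠ 0} ≃ {l : K // l ∈ (fun t => c * t) '' Λ ∧ l ≠ 0} :=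
    { toFun := fun l => ⟨c * l, ⟨⟨l, l.2.1, rfl⟩, mul_ne_zero hc l.2.2⟩⟩
      invFun := fun l => ⟨c⁻¹ * l, by
        obtain ⟨x, hx, hxe⟩ := l.2.1
        refine ⟨by rw [← hxe, ← mul_assoc, inv_mul_cancel₀ hc, one_mul]; exact hx, ?_⟩
        exact mul_ne_zero (inv_ne_zero hc) l.2.2⟩
      left_inv := fun l => by ext; simp [← mul_assoc, inv_mul_cancel₀ hc]
      right_inv := fun l => by ext; simp [← mul_assoc, mul_inv_cancel₀ hc] }
  rw [← Equiv.tprod_eq e (fun l => 1 - (c*z) / (l : K))]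
  have : ∀ l : {l : K // l ∈ Λ ∧ l ≠ 0}, 1 - (c*z)/((e l : K)) = 1 - z/(l:K) := by
    intro l
    have : ((e l : K)) = c * l := rfl
    rw [this, mul_div_mul_left _ _ hc]
  rw [tprod_congr this, mul_assoc]

lemma finprod_linear {K : Type*} [Field K] [DecidableEq K] (V : Finset K) (h0 : (0:K) ∈ V) (z : K) :
    z * ∏ v ∈ V.erase 0, (1 - z/v)
      = ((-1)^((V.erase 0).card) * (∏ v ∈ V.erase 0, v)⁻¹) * ∏ v ∈ V, (z - v) := by
  rw [← Finset.mul_prod_erase V _ h0, sub_zero]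
  have h1 : ∏ v ∈ V.erase 0, (1 - z/v) = ∏ v ∈ V.erase 0, ((v - z) * v⁻¹) := by
    refine Finset.prod_congr rfl fun v hv => ?_
    have hvne : v ≠ 0 := Finset.ne_of_mem_erase hv
    field_simp
  rw [h1, Finset.prod_mul_distrib]
  have h2 : ∏ v ∈ V.erase 0, (v - z) = (-1)^((V.erase 0).card) * ∏ v ∈ V.erase 0, (z - v) := by
    rw [← Finset.prod_const (-1 : K), ← Finset.prod_mul_distrib]
    exact Finset.prod_congr rfl fun v hv => by ring
  rw [h2, ← Finset.prod_inv_distrib]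
  ring

lemma finprod_shift {K : Type*} [Field K] [DecidableEq K] (V : Finset K) (h0 : (0:K) ∈ V) (l0 : K)
    (hmem : ∀ v ∈ V, v + l0 ∈ V) (hmem' : ∀ v ∈ V, v - l0 ∈ V) (z : K) :
    (z + l0) * ∏ v ∈ V.erase 0, (1 - (z + l0)/v) = z * ∏ v ∈ V.erase 0, (1 - z/v) := by
  rw [finprod_linear V h0, finprod_linear V h0]
  congr 1
  refine Finset.prod_bij' (fun v _ => v - l0) (fun v _ => v + l0) ?_ ?_ ?_ ?_ ?_
  · intro v hv; exact hmem' v hv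
  · intro v hv; exact hmem v hv
  · intro v hv; ring
  · intro v hv; ring
  · intro v hv; ring


set_option maxHeartbeats 1000000 in
set_option synthInstance.maxHeartbeats 400000 in
lemma expF_periodic {K : Type*} [NontriviallyNormedField K] [IsUltrametricDist K]
    [CompleteSpace K] (Fq : Subfield K) [hFqf : Finite ↥Fq] (Λ : Set K)
    (hdisc : StronglyDiscrete Λ) (h0 : (0:K) ∈ Λ)
    (hadd : ∀ a ∈ Λ, ∀ b ∈ Λ, a + b ∈ Λ)
    (hsmul : ∀ c : ↥Fq, ∀ a ∈ Λ, (c : K) * a ∈ Λ)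
    (l0 : K) (hl0 : l0 ∈ Λ) (z : K) :
    expF Λ (z + l0) = expF Λ z := by
  classical
  set ι := {l : K // l ∈ Λ ∧ l ≠ 0} with hι
  -- Λ as an Fq-submodule
  set Λs : Submodule ↥Fq K :=
    { carrier := Λ
      add_mem' := fun {a b} ha hb => hadd a ha b hb
      zero_mem' := h0
      smul_mem' := fun c a ha => hsmul c a ha } with hΛs
  -- finite spans
  have hspanfin : ∀ s : Finset ι, ((Submodule.span ↥Fq
      ({l0} ∪ (Subtype.val '' (s : Set ι))) : Submodule ↥Fq K) : Set K).Finite := by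
    intro s
    have hs : ({l0} ∪ (Subtype.val '' (s : Set ι))).Finite :=
      (Set.finite_singleton l0).union ((s : Set ι).toFinite.image _)
    have h1 : FiniteDimensional ↥Fq (Submodule.span ↥Fq ({l0} ∪ (Subtype.val '' (s : Set ι)))) :=
      FiniteDimensional.span_of_finite _ hs
    have : Finite ↥(Submodule.span ↥Fq ({l0} ∪ (Subtype.val '' (s : Set ι)))) :=
      Module.finite_of_finite ↥Fq
    exact Set.toFinite _
  set VF : Finset ι → Finset K := fun s => (hspanfin s).toFinset with hVF
  have hVFspan : ∀ s, (VF s : Set K) =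
      ((Submodule.span ↥Fq ({l0} ∪ (Subtype.val '' (s : Set ι))) : Submodule ↥Fq K) : Set K) := by
    intro s; simp [hVF]
  have hVFsubΛ : ∀ s, ∀ v ∈ VF s, v ∈ Λ := by
    intro s v hv
    have h1 : ({l0} ∪ (Subtype.val '' (s : Set ι))) ⊆ (Λs : Set K) := by
      rintro x (rfl | ⟨l, hl, rfl⟩)
      · exact hl0
      · exact l.2.1
    have h2 := Submodule.span_le.mpr h1
    have : v ∈ (Submodule.span ↥Fq ({l0} ∪ (Subtype.val '' (s : Set ι))) : Set K) := by
      rw [← hVFspan s]; exact_mod_cast hv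
    exact h2 this
  have hl0mem : ∀ s, l0 ∈ VF s := by
    intro s
    have : l0 ∈ (Submodule.span ↥Fq ({l0} ∪ (Subtype.val '' (s : Set ι))) : Set K) :=
      Submodule.subset_span (Set.mem_union_left _ rfl)
    rw [← hVFspan s] at this; exact_mod_cast this
  have h0mem : ∀ s, (0:K) ∈ VF s := by
    intro s
    have : (0:K) ∈ (Submodule.span ↥Fq ({l0} ∪ (Subtype.val '' (s : Set ι))) : Set K) :=
      Submodule.zero_mem _
    rw [← hVFspan s] at this; exact_mod_cast this
  have haddVF : ∀ s, ∀ v ∈ VF s, v + l0 ∈ VF s := by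
    intro s v hv
    have h1 : v ∈ (Submodule.span ↥Fq ({l0} ∪ (Subtype.val '' (s : Set ι))) : Set K) := by
      rw [← hVFspan s]; exact_mod_cast hv
    have h2 : v + l0 ∈ (Submodule.span ↥Fq ({l0} ∪ (Subtype.val '' (s : Set ι))) : Set K) :=
      Submodule.add_mem _ h1 (Submodule.subset_span (Set.mem_union_left _ rfl))
    rw [← hVFspan s] at h2; exact_mod_cast h2
  have hsubVF : ∀ s, ∀ v ∈ VF s, v - l0 ∈ VF s := by
    intro s v hv
    have h1 : v ∈ (Submodule.span ↥Fq ({l0} ∪ (Subtype.val '' (s : Set ι))) : Set K) := by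
      rw [← hVFspan s]; exact_mod_cast hv
    have h2 : v - l0 ∈ (Submodule.span ↥Fq ({l0} ∪ (Subtype.val '' (s : Set ι))) : Set K) :=
      Submodule.sub_mem _ h1 (Submodule.subset_span (Set.mem_union_left _ rfl))
    rw [← hVFspan s] at h2; exact_mod_cast h2
  -- the index map
  set p : K → Prop := fun l => l ∈ Λ ∧ l ≠ 0 with hp
  set T : Finset ι → Finset ι := fun s => (VF s).subtype p with hT
  have hsT : ∀ s : Finset ι, s ⊆ T s := by
    intro s i hi
    rw [hT, Finset.mem_subtype]
    have : (i : K) ∈ (Submodule.span ↥Fq ({l0} ∪ (Subtype.val '' (s : Set ι))) : Set K) :=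
      Submodule.subset_span (Set.mem_union_right _ ⟨i, hi, rfl⟩)
    rw [← hVFspan s] at this; exact_mod_cast this
  have hTtend : Tendsto T atTop atTop := by
    rw [Filter.tendsto_atTop_atTop]
    intro b
    exact ⟨b, fun c hc => (hc.trans (hsT c) : b ⊆ T c)⟩
  -- partial products over T s equal finite products over (VF s).erase 0
  have hTprod : ∀ (zz : K) (s : Finset ι),
      zz * ∏ i ∈ T s, (1 - zz / (i : K)) = zz * ∏ v ∈ (VF s).erase 0, (1 - zz / v) := by
    intro zz s
    congr 1
    rw [hT]
    refine Eq.trans (Finset.prod_subtype_eq_prod_filter (s := VF s)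
      (fun v : K => 1 - zz / v) (p := p)) ?_
    congr 1
    ext v
    simp only [Finset.mem_filter, Finset.mem_erase, hp]
    constructor
    · rintro ⟨hv, _, hne⟩; exact ⟨hne, hv⟩
    · rintro ⟨hne, hv⟩; exact ⟨hv, hVFsubΛ s v hv, hne⟩
  -- convergence
  have hconv : ∀ zz : K, Tendsto (fun s : Finset ι => zz * ∏ i ∈ T s, (1 - zz / (i : K)))
      atTop (𝓝 (expF Λ zz)) := by
    intro zz
    have hm : Multipliable (fun l : ι => 1 - zz / (l : K)) :=
      mult_of_tendsto_one _ (expF_factors_tendsto hdisc zz)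
    have hhp : HasProd (fun l : ι => 1 - zz / (l : K)) (∏' l : ι, (1 - zz / (l : K))) :=
      hm.hasProd
    have h2 : Tendsto (fun s : Finset ι => ∏ i ∈ T s, (1 - zz / (i : K))) atTop
        (𝓝 (∏' l : ι, (1 - zz / (l : K)))) := hhp.comp hTtend
    have h3 := h2.const_mul zz
    simpa [expF] using h3
  have heq : ∀ s : Finset ι,
      (z + l0) * ∏ i ∈ T s, (1 - (z + l0) / (i : K)) = z * ∏ i ∈ T s, (1 - z / (i : K)) := by
    intro s
    rw [hTprod (z + l0) s, hTprod z s]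
    exact finprod_shift (VF s) (h0mem s) l0 (haddVF s) (hsubVF s) z
  have h1 := hconv (z + l0)
  rw [show (fun s : Finset ι => (z + l0) * ∏ i ∈ T s, (1 - (z + l0) / (i : K)))
      = (fun s : Finset ι => z * ∏ i ∈ T s, (1 - z / (i : K))) from funext heq] at h1
  exact tendsto_nhds_unique h1 (hconv z)


set_option maxHeartbeats 1000000 in
set_option synthInstance.maxHeartbeats 400000 in
lemma image_rvPair_stronglyDiscrete {K : Type*} [NontriviallyNormedField K] [CompleteSpace K]
    (Finf : Subfield K) (hclosed : IsClosed (Finf : Set K))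
    (w0 : ↥Finf) (hw0 : 1 < ‖w0‖)
    {r : ℕ} (ω : Fin r → K)
    (hω : ∀ x : Fin r → K, (∀ i, x i ∈ Finf) → rvPair x ω = 0 → x = 0)
    (M : Set (Fin r → K)) (hM : StronglyDiscrete M) (hMF : ∀ x ∈ M, ∀ i, x i ∈ Finf) :
    StronglyDiscrete ((fun x => rvPair x ω) '' M) := by
  letI : NontriviallyNormedField ↥Finf :=
    { (inferInstance : NormedField ↥Finf) with non_trivial := ⟨w0, hw0⟩ }
  haveI : CompleteSpace ↥Finf := hclosed.completeSpace_coe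
  letI : NormedSpace ↥Finf K :=
    { (inferInstance : Module ↥Finf K) with
      norm_smul_le := fun c x => le_of_eq (norm_mul (c : K) x) }
  set T : (Fin r → ↥Finf) →ₗ[↥Finf] K :=
    { toFun := fun v => ∑ i, ((v i : K) * ω i)
      map_add' := by
        intro v w
        show (∑ i, (((v + w) i : K) * ω i)) = (∑ i, ((v i : K) * ω i)) + ∑ i, ((w i : K) * ω i)
        rw [← Finset.sum_add_distrib]
        refine Finset.sum_congr rfl fun i _ => ?_
        have h1 : (((v + w) i : K)) = (v i : K) + (w i : K) := rfl
        rw [h1]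
        ring
      map_smul' := by
        intro c v
        show (∑ i, (((c • v) i : K) * ω i)) = c • ∑ i, ((v i : K) * ω i)
        rw [Finset.smul_sum]
        refine Finset.sum_congr rfl fun i _ => ?_
        have h1 : ((c • v) i : K) = (c : K) * (v i : K) := rfl
        have h2 : c • ((v i : K) * ω i) = (c : K) * ((v i : K) * ω i) := rfl
        rw [h1, h2]
        ring } with hTdef
  have hker : LinearMap.ker T = ⊥ := by
    rw [LinearMap.ker_eq_bot']
    intro v hv
    have h1 : rvPair (fun i => (v i : K)) ω = 0 := by
      rw [rvPair]; exact hv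
    have h2 := hω _ (fun i => (v i).2) h1
    funext i
    have := congrFun h2 i
    exact Subtype.ext this
  obtain ⟨C, hC0, hC⟩ := T.exists_antilipschitzWith hker
  intro B hB
  obtain ⟨ρ, hρ⟩ := hB.exists_norm_le
  refine Set.Finite.subset ((hM (Metric.closedBall 0 ((C : ℝ) * ρ))
    Metric.isBounded_closedBall).image (fun x => rvPair x ω)) ?_
  rintro y ⟨⟨x, hxM, rfl⟩, hyB⟩
  refine ⟨x, ⟨hxM, ?_⟩, rfl⟩
  set v : Fin r → ↥Finf := fun i => ⟨x i, hMF x hxM i⟩ with hv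
  have hTv : T v = rvPair x ω := by rw [rvPair]; rfl
  have h3 : ‖v‖ ≤ (C : ℝ) * ‖rvPair x ω‖ := by
    have := hC.le_mul_dist v 0
    rw [dist_zero_right, map_zero, dist_zero_right, hTv] at this
    exact this
  have h4 : ‖rvPair x ω‖ ≤ ρ := hρ _ hyB
  have h5 : ‖v‖ ≤ (C : ℝ) * ρ := h3.trans (by
    exact mul_le_mul_of_nonneg_left h4 (by positivity))
  rw [Metric.mem_closedBall, dist_zero_right]
  have hCρ : (0:ℝ) ≤ (C : ℝ) * ρ := le_trans (norm_nonneg v) h5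
  rw [show x = fun i => ((v i : K)) from rfl]
  refine (pi_norm_le_iff_of_nonneg hCρ).mpr fun i => ?_
  calc ‖(v i : K)‖ = ‖v i‖ := rfl
  _ ≤ ‖v‖ := norm_le_pi_norm v i
  _ ≤ (C : ℝ) * ρ := h5


lemma coeff_comp_C_mul_X {K : Type*} [CommRing K] (P : K[X]) (j : K) (m : ℕ) :
    (P.comp (C j * X)).coeff m = j ^ m * P.coeff m := by
  induction P using Polynomial.induction_on' with
  | add p q hp hq => simp [add_comp, hp, hq, mul_add]
  | monomial n a =>
    rw [← C_mul_X_pow_eq_monomial, mul_comp, C_comp, pow_comp, X_comp, mul_pow, ← C_pow,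
      ← mul_assoc, ← C_mul, coeff_C_mul_X_pow, coeff_C_mul, coeff_X_pow]
    split_ifs with h
    · subst h; ring
    · ring

lemma prod_one_sub_scale {K : Type*} [CommRing K] {ι : Type*} (S : Finset ι) (c : ι → K)
    (j : K) :
    ∏ i ∈ S, (1 - C (j * c i) * X) = (∏ i ∈ S, (1 - C (c i) * X)).comp (C j * X) := by
  rw [Polynomial.prod_comp]
  refine Finset.prod_congr rfl fun i _ => ?_
  rw [sub_comp, one_comp, mul_comp, C_comp, X_comp, ← mul_assoc, ← C_mul, mul_comm (c i) j]

lemma coeff_main_scale {K : Type*} [CommRing K] {ι : Type*} (S : Finset ι) (c : ι → K)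
    (a j : K) (m : ℕ) :
    (C a * X * ∏ i ∈ S, (1 - C (j * c i) * X)).coeff (m + 1)
      = j ^ m * (C a * X * ∏ i ∈ S, (1 - C (c i) * X)).coeff (m + 1) := by
  rw [prod_one_sub_scale, mul_assoc, mul_assoc, coeff_C_mul, coeff_C_mul, coeff_X_mul,
    coeff_X_mul, coeff_comp_C_mul_X]
  ring


lemma det_mem_subfield {K : Type*} [Field K] (F : Subfield K) {n : ℕ}
    (M : Matrix (Fin n) (Fin n) K) (h : ∀ i j, M i j ∈ F) : M.det ∈ F := by
  rw [Matrix.det_apply]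
  refine sum_mem fun σ _ => ?_
  rw [Units.smul_def]
  exact zsmul_mem (prod_mem fun i _ => h _ _) _

lemma inv_mem_subfield {K : Type*} [Field K] (F : Subfield K) {n : ℕ}
    (M : Matrix (Fin n) (Fin n) K) (h : ∀ i j, M i j ∈ F) (i j : Fin n) : M⁻¹ i j ∈ F := by
  rw [Matrix.inv_def, Matrix.smul_apply, Ring.inverse_eq_inv', smul_eq_mul]
  refine mul_mem (inv_mem (det_mem_subfield F M h)) ?_
  rw [Matrix.adjugate_apply]
  refine det_mem_subfield F _ fun i' j' => ?_
  rw [Matrix.updateRow_apply]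
  split_ifs with h1
  · rw [Pi.single_apply]
    split_ifs
    · exact F.one_mem
    · exact F.zero_mem
  · exact h i' j'


set_option maxHeartbeats 2000000 in
set_option synthInstance.maxHeartbeats 400000 in
lemma slash_calc {K : Type*} [NontriviallyNormedField K] [IsUltrametricDist K] [CompleteSpace K]
    (Finf : Subfield K) (hFinfclosed : IsClosed (Finf : Set K))
    (ξ : K) (hξ : ξ ≠ 0)
    (Fq : Subfield K) [hFqf : Finite ↥Fq] {q : ℕ} (hq1 : 1 ≤ q)
    (A : Subring K) (hFqA : (Fq : Set K) ⊆ A)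
    (F : Subfield K) (hFFinf : F ≤ Finf)
    {r : ℕ} (hr0 : 0 < r)
    (L : Set (Fin r → K))
    (h0L : (0 : Fin r → K) ∈ L)
    (hsubL : ∀ x ∈ L, ∀ y ∈ L, x - y ∈ L)
    (w0 : K) (hw0F : w0 ∈ Finf) (hw0 : 1 < ‖w0‖)
    (N : Ideal A)
    (γ : Matrix (Fin r) (Fin r) K) (hγF : ∀ i j, γ i j ∈ F) (hγdet : γ.det ≠ 0)
    (hMF : ∀ x ∈ (fun x => Matrix.vecMul x γ) '' L, ∀ i, x i ∈ F)
    (hMA : ∀ c ∈ (A : Set K), ∀ x ∈ (fun x => Matrix.vecMul x γ) '' L,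
      c • x ∈ (fun x => Matrix.vecMul x γ) '' L)
    (hMdisc : StronglyDiscrete ((fun x => Matrix.vecMul x γ) '' L))
    (k : ℕ) (R R' : Finset (Fin r → K))
    (hR : IsRepSet L (invIdl N L) R)
    (hR' : IsRepSet ((fun x => Matrix.vecMul x γ) '' L)
      (invIdl N ((fun x => Matrix.vecMul x γ) '' L)) R')
    (ω : Fin r → K)
    (hω1 : ∀ x : Fin r → K, (∀ i, x i ∈ Finf) → rvPair x ω = 0 → x = 0)
    (Nstar : K) :
    (jfac hr0 ξ γ ω) ^ (-((q : ℤ) ^ k - 1)) *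
        gCoef L R Nstar q k (actOmega hr0 ξ γ ω) =
      gCoef ((fun x => Matrix.vecMul x γ) '' L) R' Nstar q k ω := by
  classical
  set g : (Fin r → K) → (Fin r → K) := fun x => Matrix.vecMul x γ with hgdef
  set M' : Set (Fin r → K) := g '' L with hM'def
  have hu : IsUnit γ.det := isUnit_iff_ne_zero.mpr hγdet
  have hgg : ∀ x, Matrix.vecMul (g x) γ⁻¹ = x := by
    intro x
    rw [hgdef, Matrix.vecMul_vecMul, Matrix.mul_nonsing_inv _ hu, Matrix.vecMul_one]
  have hgg' : ∀ y, g (Matrix.vecMul y γ⁻¹) = y := by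
    intro y
    show Matrix.vecMul (Matrix.vecMul y γ⁻¹) γ = y
    rw [Matrix.vecMul_vecMul, Matrix.nonsing_inv_mul _ hu, Matrix.vecMul_one]
  have hginj : Function.Injective g := by
    intro x y hxy
    have := congrArg (fun z => Matrix.vecMul z γ⁻¹) hxy
    simpa [hgg] using this
  have hgsub : ∀ x y, g (x - y) = g x - g y := fun x y => Matrix.sub_vecMul γ x y
  have hgsmul : ∀ (c : K) x, g (c • x) = c • g x := fun c x => Matrix.smul_vecMul c x γ
  -- M' closure properties
  have h0M : (0 : Fin r → K) ∈ M' := ⟨0, h0L, by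
    show Matrix.vecMul 0 γ = 0
    simp [Matrix.vecMul_zero]⟩
  have hsubM : ∀ x ∈ M', ∀ y ∈ M', x - y ∈ M' := by
    rintro x ⟨x₀, hx₀, rfl⟩ y ⟨y₀, hy₀, rfl⟩
    exact ⟨x₀ - y₀, hsubL x₀ hx₀ y₀ hy₀, hgsub x₀ y₀⟩
  have haddM : ∀ x ∈ M', ∀ y ∈ M', x + y ∈ M' := by
    intro x hx y hy
    have h1 : (0 : Fin r → K) - y ∈ M' := hsubM 0 h0M y hy
    have h2 := hsubM x hx _ h1
    simpa using h2
  have hnegM : ∀ x ∈ M', -x ∈ M' := by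
    intro x hx
    simpa using hsubM 0 h0M x hx
  -- pairing linearity
  have hpadd : ∀ x y : Fin r → K, rvPair (x + y) ω = rvPair x ω + rvPair y ω := by
    intro x y
    rw [rvPair, rvPair, rvPair, ← Finset.sum_add_distrib]
    exact Finset.sum_congr rfl fun i _ => by simp [add_mul]
  have hpsub : ∀ x y : Fin r → K, rvPair (x - y) ω = rvPair x ω - rvPair y ω := by
    intro x y
    rw [rvPair, rvPair, rvPair, ← Finset.sum_sub_distrib]
    exact Finset.sum_congr rfl fun i _ => by simp [sub_mul]
  have hpsmul : ∀ (c : K) (x : Fin r → K), rvPair (c • x) ω = c * rvPair x ω := by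
    intro c x
    rw [rvPair, rvPair, Finset.mul_sum]
    exact Finset.sum_congr rfl fun i _ => by simp [mul_assoc]
  -- the lattice Λ'
  set Λ' : Set K := (fun x => rvPair x ω) '' M' with hΛ'def
  have h0Λ : (0 : K) ∈ Λ' := ⟨0, h0M, by simp [rvPair]⟩
  have haddΛ : ∀ s ∈ Λ', ∀ t ∈ Λ', s + t ∈ Λ' := by
    rintro s ⟨x, hx, rfl⟩ t ⟨y, hy, rfl⟩
    refine ⟨x + y, haddM x hx y hy, ?_⟩
    show rvPair (x + y) ω = rvPair x ω + rvPair y ω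
    exact hpadd x y
  have hsmulΛ : ∀ c : ↥Fq, ∀ t ∈ Λ', (c : K) * t ∈ Λ' := by
    rintro c t ⟨x, hx, rfl⟩
    refine ⟨(c : K) • x, hMA (c : K) (hFqA c.2) x hx, ?_⟩
    show rvPair ((c : K) • x) ω = (c : K) * rvPair x ω
    exact hpsmul (c : K) x
  have hΛdisc : StronglyDiscrete Λ' :=
    image_rvPair_stronglyDiscrete Finf hFinfclosed ⟨w0, hw0F⟩ hw0 ω hω1 M' hMdisc
      (fun x hx i => hFFinf (hMF x hx i))
  -- j is nonzero
  set j : K := jfac hr0 ξ γ ω with hjdef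
  have jne : j ≠ 0 := by
    intro hj0
    rw [hjdef, jfac] at hj0
    have h1 : (γ.mulVec ω) (lastIdx r hr0) = 0 := by
      rcases mul_eq_zero.mp hj0 with h | h
      · exact absurd h (inv_ne_zero hξ)
      · exact h
    set row : Fin r → K := fun i => γ (lastIdx r hr0) i with hrow
    have h2 : rvPair row ω = 0 := by
      rw [rvPair]
      rw [show (γ.mulVec ω) (lastIdx r hr0) = ∑ i, row i * ω i from rfl] at h1
      exact h1
    have h3 := hω1 row (fun i => hFFinf (hγF _ i)) h2
    have h4 : γ.det = 0 := Matrix.det_eq_zero_of_row_eq_zero (lastIdx r hr0)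
      (fun j => congrFun h3 j)
    exact hγdet h4
  -- pairing with actOmega
  have hpair' : ∀ x : Fin r → K, rvPair x (actOmega hr0 ξ γ ω) = j⁻¹ * rvPair (g x) ω := by
    intro x
    rw [actOmega, ← hjdef]
    have e1 : rvPair x (j⁻¹ • γ.mulVec ω) = j⁻¹ * rvPair x (γ.mulVec ω) := by
      rw [rvPair, rvPair, Finset.mul_sum]
      exact Finset.sum_congr rfl fun i _ => by simp; ring
    rw [e1]
    congr 1
    show dotProduct x (γ.mulVec ω) = dotProduct (Matrix.vecMul x γ) ω
    exact Matrix.dotProduct_mulVec x γ ω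
  -- scaled lattice
  have hscale : (fun x => rvPair x (actOmega hr0 ξ γ ω)) '' L = (fun t => j⁻¹ * t) '' Λ' := by
    rw [Set.image_congr (fun x _ => hpair' x), hΛ'def, hM'def, Set.image_image,
      Set.image_image]
  -- the coset bijection
  have hinv1 : ∀ w ∈ invIdl N L, g w ∈ invIdl N M' := by
    intro w hw b hb
    have h1 := hw b hb
    exact ⟨(b : K) • w, h1, hgsmul (b : K) w⟩
  have hinv2 : ∀ y ∈ invIdl N M', Matrix.vecMul y γ⁻¹ ∈ invIdl N L := by
    intro y hy b hb
    obtain ⟨x, hx, hxe⟩ := hy b hb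
    have : (b : K) • Matrix.vecMul y γ⁻¹ = Matrix.vecMul ((b : K) • y) γ⁻¹ :=
      (Matrix.smul_vecMul (b : K) y γ⁻¹).symm
    rw [this, ← hxe]
    show Matrix.vecMul (g x) γ⁻¹ ∈ L
    rw [hgg]
    exact hx
  have hgmem : ∀ x, g x ∈ M' → x ∈ L := by
    rintro x ⟨x', hx', he⟩
    rwa [hginj he] at hx'
  have hkey : ∀ w ∈ R, ∃! y, y ∈ R' ∧ g w - y ∈ M' := by
    intro w hw
    have hw1 := hR.1 hw
    exact hR'.2 (g w) (hinv1 w hw1.1) (fun hc => hw1.2 (hgmem w hc))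
  set iM : (w : Fin r → K) → w ∈ R → (Fin r → K) :=
    fun w hw => (hkey w hw).exists.choose with hiM
  have hiMspec : ∀ w (hw : w ∈ R), iM w hw ∈ R' ∧ g w - iM w hw ∈ M' :=
    fun w hw => (hkey w hw).exists.choose_spec
  set E : (Fin r → K) → K := fun y => expF Λ' (rvPair y ω) with hE
  have factor_eq : ∀ w (hw : w ∈ R),
      (expF ((fun x => rvPair x (actOmega hr0 ξ γ ω)) '' L) (rvPair w (actOmega hr0 ξ γ ω)))⁻¹
        = j * (E (iM w hw))⁻¹ := by
    intro w hw
    rw [hscale, hpair' w]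
    rw [expF_smul' Λ' (inv_ne_zero jne)]
    have h1 : rvPair (g w) ω = rvPair (iM w hw) ω + rvPair (g w - iM w hw) ω := by
      rw [hpsub]; ring
    rw [h1, expF_periodic Fq Λ' hΛdisc h0Λ haddΛ hsmulΛ _
      ⟨g w - iM w hw, (hiMspec w hw).2, rfl⟩ _]
    rw [mul_inv, inv_inv]
  have prod_eq : ∏ w ∈ R,
        (1 - Polynomial.C ((expF ((fun x => rvPair x (actOmega hr0 ξ γ ω)) '' L)
          (rvPair w (actOmega hr0 ξ γ ω)))⁻¹) * Polynomial.X)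
      = ∏ y ∈ R', (1 - Polynomial.C (j * (E y)⁻¹) * Polynomial.X) := by
    refine Finset.prod_bij iM (fun w hw => (hiMspec w hw).1) ?_ ?_ ?_
    · intro w1 h1 w2 h2 heq
      have d1 := (hiMspec w1 h1).2
      have d2 := (hiMspec w2 h2).2
      rw [heq] at d1
      have h3 : g w1 - g w2 ∈ M' := by
        have := hsubM _ d1 _ d2
        simpa using this
      have h4 : w1 - w2 ∈ L := by
        apply hgmem
        rw [hgsub]
        exact h3
      have hw1' := hR.1 h1
      have hEU := hR.2 w1 hw1'.1 hw1'.2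
      exact hEU.unique ⟨h1, by simpa using h0L⟩ ⟨h2, h4⟩
    · intro y' hy'
      have hy1 := hR'.1 hy'
      set x' := Matrix.vecMul y' γ⁻¹ with hx'
      have hx'inv : x' ∈ invIdl N L := hinv2 y' hy1.1
      have hx'notL : x' ∉ L := by
        intro hc
        exact hy1.2 ⟨x', hc, hgg' y'⟩
      obtain ⟨w, ⟨hwR, hwL⟩, -⟩ := hR.2 x' hx'inv hx'notL
      refine ⟨w, hwR, ?_⟩
      refine ((hkey w hwR).unique (hiMspec w hwR) ⟨hy', ?_⟩).symm ▸ rfl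
      have h5 : w - x' ∈ L := by
        have := hsubL 0 h0L (x' - w) (by
          have := hwL
          exact this)
        simpa [neg_sub] using this
      have h6 : g w - y' = g (w - x') := by
        rw [hgsub, hgg' y']
      rw [h6]
      exact ⟨w - x', h5, rfl⟩
    · intro w hw
      rw [factor_eq w hw]
  have hqk : 1 ≤ q ^ k := Nat.one_le_pow k q (by omega)
  have hmm : q ^ k = (q ^ k - 1) + 1 := by omega
  simp only [gCoef]
  rw [prod_eq, hmm, coeff_main_scale R' (fun y => (E y)⁻¹) Nstar j (q ^ k - 1)]
  have hz : -((q : ℤ) ^ k - 1) = -(((q ^ k - 1 : ℕ)) : ℤ) := by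
    rw [Nat.cast_sub hqk]
    push_cast
    ring
  rw [hz, zpow_neg, zpow_natCast, inv_mul_cancel_left₀ (pow_ne_zero _ jne)]


end Helpers

/-- Proposition 15.3(a): `g^L_{N,k}|_{q^k−1} γ = g^{Lγ}_{N,k}`, and `Lγ`
is again a finitely generated `A`-submodule of `F^r` spanning `F^r` and strongly
discrete. -/
theorem coefficient_form_slash
    (K : Type*) [NontriviallyNormedField K] [IsUltrametricDist K] [CompleteSpace K]
    [IsAlgClosed K]
    (Finf : Subfield K) (hFinfclosed : IsClosed (Finf : Set K))
    (hFinfloc : LocallyCompactSpace Finf)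
    (ξ : K) (hξ : ξ ≠ 0)
    (Fq : Subfield K) (hFqfin : Finite Fq) (q : ℕ) (hq : Nat.card Fq = q)
    (A : Subring K) (hFqA : (Fq : Set K) ⊆ A)
    (F : Subfield K) (hAF : (A : Set K) ⊆ F) (hFFinf : F ≤ Finf)
    (hDed : IsDedekindDomain A)
    (hFrac : ∀ z ∈ F, ∃ a ∈ A, ∃ b ∈ A, b ≠ 0 ∧ z * b = a)
    (hquot : ∀ I : Ideal A, I ≠ ⊥ → Finite (A ⧸ I))
    (r : ℕ) (hr : 2 ≤ r)
    (L : Set (Fin r → K))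
    (hLsub : ∃ G : AddSubgroup (Fin r → K), (G : Set (Fin r → K)) = L)
    (hLF : ∀ x ∈ L, ∀ i, x i ∈ F)
    (hLA : ∀ a ∈ (A : Set K), ∀ x ∈ L, a • x ∈ L)
    (hLfg : ∃ T : Finset (Fin r → K), (T : Set (Fin r → K)) ⊆ L ∧
      ∀ x ∈ L, x ∈ AddSubgroup.closure
        {y | ∃ a ∈ (A : Set K), ∃ t ∈ (T : Set (Fin r → K)), y = a • t})
    (hLspan : ∀ y : Fin r → K, (∀ i, y i ∈ F) →
      y ∈ AddSubgroup.closure {z | ∃ c ∈ (F : Set K), ∃ x ∈ L, z = c • x})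
    (hLdisc : StronglyDiscrete L)
    (N : Ideal A) (hNne : N ≠ ⊥) (hNpr : N ≠ ⊤)
    (n : ℕ) (hn : 1 ≤ n) (a : A) (ha : a ≠ 0) (hNn : N ^ n = Ideal.span {a})
    (Nstar : K) (hNstar : Nstar ^ n = (a : K))
    (γ : Matrix (Fin r) (Fin r) K) (hγF : ∀ i j, γ i j ∈ F) (hγdet : γ.det ≠ 0) :
    -- `Lγ` is again a finitely generated `A`-submodule of `F^r` spanning `F^r`,
    -- strongly discrete in `F_∞^r`
    (∃ G : AddSubgroup (Fin r → K),
        (G : Set (Fin r → K)) = (fun x => Matrix.vecMul x γ) '' L) ∧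
    (∀ x ∈ (fun x => Matrix.vecMul x γ) '' L, ∀ i, x i ∈ F) ∧
    (∀ a' ∈ (A : Set K), ∀ x ∈ (fun x => Matrix.vecMul x γ) '' L,
      a' • x ∈ (fun x => Matrix.vecMul x γ) '' L) ∧
    (∃ T : Finset (Fin r → K), (T : Set (Fin r → K)) ⊆ (fun x => Matrix.vecMul x γ) '' L ∧
      ∀ x ∈ (fun x => Matrix.vecMul x γ) '' L, x ∈ AddSubgroup.closure
        {y | ∃ a' ∈ (A : Set K), ∃ t ∈ (T : Set (Fin r → K)), y = a' • t}) ∧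
    (∀ y : Fin r → K, (∀ i, y i ∈ F) →
      y ∈ AddSubgroup.closure
        {z | ∃ c' ∈ (F : Set K), ∃ x ∈ (fun x => Matrix.vecMul x γ) '' L, z = c' • x}) ∧
    StronglyDiscrete ((fun x => Matrix.vecMul x γ) '' L) ∧
    -- the slash equivariance `g^L_{N,k}|_{q^k−1} γ = g^{Lγ}_{N,k}`
    (∀ (k : ℕ) (R R' : Finset (Fin r → K)),
      IsRepSet L (invIdl N L) R →
      IsRepSet ((fun x => Matrix.vecMul x γ) '' L)
        (invIdl N ((fun x => Matrix.vecMul x γ) '' L)) R' →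
      ∀ ω ∈ OmegaSet r (by omega) Finf ξ,
        (jfac (by omega : 0 < r) ξ γ ω) ^ (-((q : ℤ) ^ k - 1)) *
            gCoef L R Nstar q k (actOmega (by omega) ξ γ ω) =
          gCoef ((fun x => Matrix.vecMul x γ) '' L) R' Nstar q k ω) := by
  classical
  haveI : Finite ↥Fq := hFqfin
  have hr0 : 0 < r := by omega
  obtain ⟨G, hG⟩ := hLsub
  have h0L : (0 : Fin r → K) ∈ L := by rw [← hG]; exact G.zero_mem
  have hsubL : ∀ x ∈ L, ∀ y ∈ L, x - y ∈ L := by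
    intro x hx y hy; rw [← hG] at hx hy ⊢; exact G.sub_mem hx hy
  set g : (Fin r → K) → (Fin r → K) := fun x => Matrix.vecMul x γ with hgdef
  have hu : IsUnit γ.det := isUnit_iff_ne_zero.mpr hγdet
  have hgg : ∀ x, Matrix.vecMul (Matrix.vecMul x γ) γ⁻¹ = x := by
    intro x; rw [Matrix.vecMul_vecMul, Matrix.mul_nonsing_inv _ hu, Matrix.vecMul_one]
  have hgg' : ∀ y, Matrix.vecMul (Matrix.vecMul y γ⁻¹) γ = y := by
    intro y; rw [Matrix.vecMul_vecMul, Matrix.nonsing_inv_mul _ hu, Matrix.vecMul_one]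
  set φ : (Fin r → K) →+ (Fin r → K) :=
    AddMonoidHom.mk' g (fun x y => Matrix.add_vecMul γ x y) with hφdef
  have hφg : ∀ x, φ x = g x := fun x => rfl
  -- part 1
  have part1 : ∃ G' : AddSubgroup (Fin r → K),
      (G' : Set (Fin r → K)) = (fun x => Matrix.vecMul x γ) '' L := by
    refine ⟨G.map φ, ?_⟩
    rw [AddSubgroup.coe_map, hG]
    rfl
  -- part 2
  have part2 : ∀ x ∈ (fun x => Matrix.vecMul x γ) '' L, ∀ i, x i ∈ F := by
    rintro x ⟨x₀, hx₀, rfl⟩ i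
    show (Matrix.vecMul x₀ γ) i ∈ F
    have he : (Matrix.vecMul x₀ γ) i = ∑ k', x₀ k' * γ k' i := rfl
    rw [he]
    exact sum_mem fun k' _ => mul_mem (hLF x₀ hx₀ k') (hγF k' i)
  -- part 3
  have part3 : ∀ a' ∈ (A : Set K), ∀ x ∈ (fun x => Matrix.vecMul x γ) '' L,
      a' • x ∈ (fun x => Matrix.vecMul x γ) '' L := by
    rintro a' ha' x ⟨x₀, hx₀, rfl⟩
    refine ⟨a' • x₀, hLA a' ha' x₀ hx₀, ?_⟩
    show Matrix.vecMul (a' • x₀) γ = a' • Matrix.vecMul x₀ γ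
    exact Matrix.smul_vecMul a' x₀ γ
  -- part 4
  have part4 : ∃ T : Finset (Fin r → K),
      (T : Set (Fin r → K)) ⊆ (fun x => Matrix.vecMul x γ) '' L ∧
      ∀ x ∈ (fun x => Matrix.vecMul x γ) '' L, x ∈ AddSubgroup.closure
        {y | ∃ a' ∈ (A : Set K), ∃ t ∈ (T : Set (Fin r → K)), y = a' • t} := by
    obtain ⟨T, hT1, hT2⟩ := hLfg
    refine ⟨T.image g, ?_, ?_⟩
    · intro t ht
      rw [Finset.coe_image] at ht
      obtain ⟨t₀, ht₀, rfl⟩ := ht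
      exact ⟨t₀, hT1 ht₀, rfl⟩
    · rintro x ⟨x₀, hx₀, rfl⟩
      have h1 := hT2 x₀ hx₀
      have h2 : φ x₀ ∈ (AddSubgroup.closure
          {y | ∃ a ∈ (A : Set K), ∃ t ∈ (T : Set (Fin r → K)), y = a • t}).map φ :=
        AddSubgroup.mem_map_of_mem φ h1
      rw [AddMonoidHom.map_closure] at h2
      have h3 : ⇑φ '' {y | ∃ a ∈ (A : Set K), ∃ t ∈ (T : Set (Fin r → K)), y = a • t}
          ⊆ ↑(AddSubgroup.closure
            {y | ∃ a' ∈ (A : Set K), ∃ t ∈ ((T.image g : Finset (Fin r → K)) :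
              Set (Fin r → K)), y = a' • t}) := by
        rintro z ⟨y, ⟨b, hb, t, ht, rfl⟩, rfl⟩
        refine AddSubgroup.subset_closure ⟨b, hb, g t, ?_, ?_⟩
        · rw [Finset.coe_image]
          exact ⟨t, ht, rfl⟩
        · show φ (b • t) = b • g t
          rw [hφg]
          exact Matrix.smul_vecMul b t γ
      exact (AddSubgroup.closure_le _).mpr h3 h2
  -- part 5
  have part5 : ∀ y : Fin r → K, (∀ i, y i ∈ F) →
      y ∈ AddSubgroup.closure
        {z | ∃ c' ∈ (F : Set K), ∃ x ∈ (fun x => Matrix.vecMul x γ) '' L, z = c' • x} := by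
    intro y hy
    have hyF : ∀ i, (Matrix.vecMul y γ⁻¹) i ∈ F := by
      intro i
      have he : (Matrix.vecMul y γ⁻¹) i = ∑ k', y k' * γ⁻¹ k' i := rfl
      rw [he]
      exact sum_mem fun k' _ => mul_mem (hy k') (inv_mem_subfield F γ hγF k' i)
    have h1 := hLspan (Matrix.vecMul y γ⁻¹) hyF
    have h2 : φ (Matrix.vecMul y γ⁻¹) ∈ (AddSubgroup.closure
        {z | ∃ c ∈ (F : Set K), ∃ x ∈ L, z = c • x}).map φ :=
      AddSubgroup.mem_map_of_mem φ h1
    rw [AddMonoidHom.map_closure] at h2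
    have h3 : ⇑φ '' {z | ∃ c ∈ (F : Set K), ∃ x ∈ L, z = c • x}
        ⊆ ↑(AddSubgroup.closure
          {z | ∃ c' ∈ (F : Set K), ∃ x ∈ (fun x => Matrix.vecMul x γ) '' L, z = c' • x}) := by
      rintro z ⟨y', ⟨c, hc, x, hx, rfl⟩, rfl⟩
      refine AddSubgroup.subset_closure ⟨c, hc, g x, ⟨x, hx, rfl⟩, ?_⟩
      show φ (c • x) = c • g x
      rw [hφg]
      exact Matrix.smul_vecMul c x γ
    have h4 := (AddSubgroup.closure_le _).mpr h3 h2
    have h5 : φ (Matrix.vecMul y γ⁻¹) = y := by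
      rw [hφg]
      exact hgg' y
    rwa [h5] at h4
  -- part 6
  have part6 : StronglyDiscrete ((fun x => Matrix.vecMul x γ) '' L) := by
    intro B hB
    set ℓ : (Fin r → K) →L[K] (Fin r → K) :=
      LinearMap.toContinuousLinearMap (Matrix.vecMulLinear γ⁻¹) with hℓ
    have hBb : Bornology.IsBounded (⇑ℓ '' B) := ℓ.lipschitz.isBounded_image hB
    refine Set.Finite.subset ((hLdisc _ hBb).image g) ?_
    rintro y ⟨⟨x, hx, rfl⟩, hyB⟩
    refine ⟨x, ⟨hx, ⟨g x, hyB, ?_⟩⟩, rfl⟩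
    show ℓ (g x) = x
    rw [hℓ]
    rw [LinearMap.coe_toContinuousLinearMap']
    rw [Matrix.vecMulLinear_apply]
    exact hgg x
  refine ⟨part1, part2, part3, part4, part5, part6, ?_⟩
  -- part 7
  have hw : ∃ w : K, w ∈ Finf ∧ 1 < ‖w‖ := by
    by_contra hno
    push_neg at hno
    have hx0 : ∃ x0 ∈ L, x0 ≠ (0 : Fin r → K) := by
      by_contra hL0
      push_neg at hL0
      have h1 := hLspan (fun _ => (1 : K)) (fun _ => F.one_mem)
      have h3 : AddSubgroup.closure {z : Fin r → K | ∃ c ∈ (F : Set K), ∃ x ∈ L, z = c • x}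
          ≤ ⊥ := by
        refine (AddSubgroup.closure_le _).mpr ?_
        rintro z ⟨c, _, x, hx, rfl⟩
        rw [hL0 x hx]
        simp
      have h4 := h3 h1
      rw [AddSubgroup.mem_bot] at h4
      have h5 := congrFun h4 ⟨0, hr0⟩
      simp at h5
    obtain ⟨x0, hx0L, hx0ne⟩ := hx0
    have hAinf : Infinite ↥A := by
      by_contra hfin
      haveI : Finite ↥A := not_infinite_iff_finite.mp hfin
      have hf : IsField ↥A := Finite.isField_of_domain ↥A
      obtain ⟨b, hbN, hbne⟩ := Submodule.exists_mem_ne_zero_of_ne_bot hNne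
      obtain ⟨c, hc⟩ := hf.mul_inv_cancel hbne
      have h1 : (1 : ↥A) ∈ N := by
        rw [← hc]
        exact Ideal.mul_mem_right c N hbN
      exact hNpr ((Ideal.eq_top_iff_one N).mpr h1)
    obtain ⟨i0, hi0⟩ : ∃ i0, x0 i0 ≠ 0 := by
      by_contra hno2
      push_neg at hno2
      exact hx0ne (funext hno2)
    have hinj : Function.Injective (fun b : ↥A => ((b : K) • x0 : Fin r → K)) := by
      intro b c hbc
      have h1 := congrFun hbc i0
      simp only [Pi.smul_apply, smul_eq_mul] at h1
      exact Subtype.ext (mul_right_cancel₀ hi0 h1)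
    have hsubset : Set.range (fun b : ↥A => ((b : K) • x0 : Fin r → K))
        ⊆ L ∩ Metric.closedBall 0 ‖x0‖ := by
      rintro z ⟨b, rfl⟩
      refine ⟨hLA (b : K) b.2 x0 hx0L, ?_⟩
      rw [Metric.mem_closedBall, dist_zero_right]
      have hb1 : ‖(b : K)‖ ≤ 1 := hno _ (hFFinf (hAF b.2))
      calc ‖(b : K) • x0‖ = ‖(b : K)‖ * ‖x0‖ := norm_smul _ _
      _ ≤ 1 * ‖x0‖ := mul_le_mul_of_nonneg_right hb1 (norm_nonneg x0)
      _ = ‖x0‖ := one_mul _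
    have hfin2 : (Set.range fun b : ↥A => ((b : K) • x0 : Fin r → K)).Finite :=
      Set.Finite.subset (hLdisc _ Metric.isBounded_closedBall) hsubset
    exact (Set.infinite_range_of_injective hinj) hfin2
  obtain ⟨w0, hw0F, hw0⟩ := hw
  haveI : Nonempty ↥Fq := ⟨1⟩
  have hq1 : 1 ≤ q := by
    have := Nat.card_pos (α := ↥Fq)
    omega
  intro k R R' hR hR' ω hω
  obtain ⟨hω1, hω2⟩ := hω
  exact slash_calc Finf hFinfclosed ξ hξ Fq hq1 A hFqA F hFFinf hr0 L h0L hsubL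
    w0 hw0F hw0 N γ hγF hγdet part2 part3 part6 k R R' hR hR' ω hω1 Nstar
end
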